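/- arXiv:2512.01239 — 7 statements merged into one kernel-verified Lean document; each statement's English description precedes it below -/
import Mathlib

section
/- Let f : {0,1}^n → ℝ satisfy the bounded differences property: changing any one coordinate changes the value of f by at most 1/n. If X_1, ..., X_n are independent random variables taking values in {0,1} on a probability space (Ω, ℙ), then for every ε > 0, ℙ(|f(X_1,...,X_n) − 𝔼[f(X_1,...,X_n)]| > ε) ≤ 2·exp(−2nε²). -/
open MeasureTheory


section McDiarmidAux

lemma two_point (q t : ℝ) (hq0 : 0 ≤ q) (hq1 : q ≤ 1) :
    q * Real.exp ((q - 1) * t) + (1 - q) * Real.exp (q * t) ≤ Real.exp (t ^ 2 / 8) := by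
  set a : ℝ := q - 1 with ha
  set u : ℝ → ℝ := fun s => q * Real.exp (a * s) + (1 - q) * Real.exp ((q:ℝ) * s) with hu
  set v : ℝ → ℝ := fun s => q * a * Real.exp (a * s) + (1 - q) * q * Real.exp ((q:ℝ) * s) with hv
  set w : ℝ → ℝ := fun s => q * a ^ 2 * Real.exp (a * s) + (1 - q) * (q:ℝ) ^ 2 * Real.exp ((q:ℝ) * s)
    with hw
  have hupos : ∀ s, 0 < u s := by
    intro s
    have hA := Real.exp_pos (a * s)
    have hB := Real.exp_pos ((q:ℝ) * s)
    rcases lt_or_eq_of_le hq0 with h | h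
    · have h1 : 0 < q * Real.exp (a * s) := by positivity
      have h2 : 0 ≤ (1 - q) * Real.exp ((q:ℝ) * s) :=
        mul_nonneg (by linarith) hB.le
      simp only [hu]; linarith
    · simp only [hu, ← h]; simpa using hB
  have hderiv_exp : ∀ (c s : ℝ), HasDerivAt (fun r => Real.exp (c * r)) (c * Real.exp (c * s)) s := by
    intro c s
    have h1 : HasDerivAt (fun r : ℝ => c * r) c s := by
      simpa using (hasDerivAt_id s).const_mul c
    have := h1.exp
    simpa [mul_comm] using this
  have hud : ∀ s, HasDerivAt u (v s) s := by
    intro s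
    have h1 := ((hderiv_exp a s).const_mul q)
    have h2 := ((hderiv_exp q s).const_mul (1 - q))
    have := h1.add h2
    simpa [hu, hv, mul_assoc, mul_comm, mul_left_comm, Pi.add_def] using this
  have hvd : ∀ s, HasDerivAt v (w s) s := by
    intro s
    have h1 := ((hderiv_exp a s).const_mul (q * a))
    have h2 := ((hderiv_exp q s).const_mul ((1 - q) * q))
    have := h1.add h2
    have e : q * a * (a * Real.exp (a * s)) + (1 - q) * q * (q * Real.exp ((q:ℝ) * s)) = w s := by
      simp [hw]; ring
    rw [e] at this
    exact this
  -- g1 = derivative of log ∘ u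
  set g1 : ℝ → ℝ := fun s => v s / u s with hg1
  set g2 : ℝ → ℝ := fun s => (w s * u s - v s * v s) / (u s) ^ 2 with hg2
  have hg1d : ∀ s, HasDerivAt g1 (g2 s) s := by
    intro s
    have := (hvd s).div (hud s) (ne_of_gt (hupos s))
    simpa [hg1, hg2, Pi.div_def] using this
  have hg2le : ∀ s, g2 s ≤ 1 / 4 := by
    intro s
    rw [hg2, div_le_iff₀ (pow_pos (hupos s) 2)]
    have hA := Real.exp_pos (a * s)
    have hB := Real.exp_pos ((q:ℝ) * s)
    have key : (u s) ^ 2 - 4 * (w s * u s - v s * v s)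
        = (q * Real.exp (a * s) - (1 - q) * Real.exp ((q:ℝ) * s)) ^ 2 := by
      simp only [hu, hv, hw, ha]
      ring
    have h4 : (0:ℝ) ≤ (q * Real.exp (a * s) - (1 - q) * Real.exp ((q:ℝ) * s)) ^ 2 := sq_nonneg _
    rw [← key] at h4
    clear_value u v w
    linarith
  -- φ1 := t/4 - g1 is monotone, φ1 0 = 0
  set φ1 : ℝ → ℝ := fun s => s / 4 - g1 s with hφ1
  have hφ1d : ∀ s, HasDerivAt φ1 (1 / 4 - g2 s) s := by
    intro s
    exact ((hasDerivAt_id s).div_const 4).sub (hg1d s)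
  have hφ1mono : Monotone φ1 := by
    apply monotone_of_deriv_nonneg
    · intro s; exact (hφ1d s).differentiableAt
    · intro s
      rw [(hφ1d s).deriv]
      linarith [hg2le s]
  have hφ10 : φ1 0 = 0 := by
    simp [hφ1, hg1, hv, hu, ha]
    ring
  -- φ := t²/8 - log (u t)
  set φ : ℝ → ℝ := fun s => s ^ 2 / 8 - Real.log (u s) with hφ
  have hφd : ∀ s, HasDerivAt φ (φ1 s) s := by
    intro s
    have h1 : HasDerivAt (fun s : ℝ => s ^ 2 / 8) (s / 4) s := by
      have h := (hasDerivAt_pow 2 s).div_const 8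
      refine h.congr_deriv ?_
      norm_num
      ring
    have h2 : HasDerivAt (fun s => Real.log (u s)) (g1 s) s :=
      (hud s).log (ne_of_gt (hupos s))
    simpa [hφ1, Pi.sub_def] using h1.sub h2
  have hφ0 : φ 0 = 0 := by
    simp [hφ, hu]
  have hφnonneg : 0 ≤ φ t := by
    rcases le_total 0 t with h | h
    · have : MonotoneOn φ (Set.Ici 0) := by
        apply monotoneOn_of_deriv_nonneg (convex_Ici 0)
        · exact Continuous.continuousOn
            (Differentiable.continuous (fun s => (hφd s).differentiableAt))
        · intro s _; exact (hφd s).differentiableAt.differentiableWithinAt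
        · intro s hs
          rw [(hφd s).deriv]
          have : (0:ℝ) ≤ s := le_of_lt (by simpa using hs)
          calc (0:ℝ) = φ1 0 := hφ10.symm
            _ ≤ φ1 s := hφ1mono this
      have := this (Set.self_mem_Ici) (by exact h) h
      rwa [hφ0] at this
    · have : AntitoneOn φ (Set.Iic 0) := by
        apply antitoneOn_of_deriv_nonpos (convex_Iic 0)
        · exact Continuous.continuousOn
            (Differentiable.continuous (fun s => (hφd s).differentiableAt))
        · intro s _; exact (hφd s).differentiableAt.differentiableWithinAt
        · intro s hs
          rw [(hφd s).deriv]
          have hs0 : s ≤ (0:ℝ) := le_of_lt (by simpa using hs)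
          calc φ1 s ≤ φ1 0 := hφ1mono hs0
            _ = 0 := hφ10
      have := this (by exact h) (Set.self_mem_Iic) h
      rwa [hφ0] at this
  have hlog : Real.log (u t) ≤ t ^ 2 / 8 := by
    have := hφnonneg
    simp only [hφ] at this
    linarith
  calc q * Real.exp ((q - 1) * t) + (1 - q) * Real.exp (q * t) = u t := by rw [hu]
    _ = Real.exp (Real.log (u t)) := (Real.exp_log (hupos t)).symm
    _ ≤ Real.exp (t ^ 2 / 8) := Real.exp_le_exp.mpr hlog

noncomputable def Ex (n : ℕ) (w : Fin n → Bool → ℝ) (g : (Fin n → Bool) → ℝ) : ℝ :=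
  ∑ x : Fin n → Bool, (∏ i, w i (x i)) * g x

lemma Ex_mono {n : ℕ} {w : Fin n → Bool → ℝ} (hw : ∀ i b, 0 ≤ w i b)
    {g h : (Fin n → Bool) → ℝ} (hgh : ∀ x, g x ≤ h x) : Ex n w g ≤ Ex n w h := by
  apply Finset.sum_le_sum
  intro x _
  exact mul_le_mul_of_nonneg_left (hgh x) (Finset.prod_nonneg fun i _ => hw i (x i))

lemma Ex_smul {n : ℕ} (w : Fin n → Bool → ℝ) (c : ℝ) (g : (Fin n → Bool) → ℝ) :
    Ex n w (fun x => c * g x) = c * Ex n w g := by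
  simp only [Ex, Finset.mul_sum]
  congr 1; ext x; ring

lemma Ex_succ (n : ℕ) (w : Fin (n + 1) → Bool → ℝ) (g : (Fin (n + 1) → Bool) → ℝ) :
    Ex (n + 1) w g = Ex n (fun i => w i.succ)
      (fun x => w 0 false * g (Fin.cons false x) + w 0 true * g (Fin.cons true x)) := by
  rw [Ex, ← Equiv.sum_comp (Fin.consEquiv (fun _ : Fin (n+1) => Bool))
    (fun x => (∏ i, w i (x i)) * g x), Fintype.sum_prod_type_right, Ex]
  apply Finset.sum_congr rfl
  intro x _
  rw [Fintype.sum_bool]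
  simp only [Fin.consEquiv, Equiv.coe_fn_mk, Fin.prod_univ_succ, Fin.cons_zero, Fin.cons_succ]
  ring

lemma mgf_bound : ∀ (n : ℕ) (w : Fin n → Bool → ℝ), (∀ i b, 0 ≤ w i b) →
    (∀ i, w i false + w i true = 1) →
    ∀ (f : (Fin n → Bool) → ℝ) (c : ℝ), 0 ≤ c →
    (∀ x i b, |f x - f (Function.update x i b)| ≤ c) → ∀ L : ℝ,
    Ex n w (fun x => Real.exp (L * (f x - Ex n w f))) ≤ Real.exp (L ^ 2 * n * c ^ 2 / 8) := by
  intro n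
  induction n with
  | zero =>
    intro w hw hw1 f c hc hbd L
    have hE : ∀ g : (Fin 0 → Bool) → ℝ, Ex 0 w g = g default := by
      intro g
      rw [Ex, Fintype.sum_subsingleton _ default]
      simp
    rw [hE, hE]
    simp
  | succ n ih =>
    intro w hw hw1 f c hc hbd L
    set w' : Fin n → Bool → ℝ := fun i => w i.succ with hw'def
    have hw'0 : ∀ i b, 0 ≤ w' i b := fun i b => hw i.succ b
    have hw'1 : ∀ i, w' i false + w' i true = 1 := fun i => hw1 i.succ
    set f' : (Fin n → Bool) → ℝ :=
      fun x => w 0 false * f (Fin.cons false x) + w 0 true * f (Fin.cons true x) with hf'def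
    have hm : Ex (n + 1) w f = Ex n w' f' := Ex_succ n w f
    set m : ℝ := Ex n w' f' with hmdef
    -- bounded differences for f'
    have hbd' : ∀ x i b, |f' x - f' (Function.update x i b)| ≤ c := by
      intro x i b
      have h1 : |f (Fin.cons false x) - f (Fin.cons false (Function.update x i b))| ≤ c := by
        rw [Fin.cons_update]; exact hbd _ _ _
      have h2 : |f (Fin.cons true x) - f (Fin.cons true (Function.update x i b))| ≤ c := by
        rw [Fin.cons_update]; exact hbd _ _ _
      have expand : f' x - f' (Function.update x i b) =
          w 0 false * (f (Fin.cons false x) - f (Fin.cons false (Function.update x i b))) +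
          w 0 true * (f (Fin.cons true x) - f (Fin.cons true (Function.update x i b))) := by
        simp only [hf'def]; ring
      rw [expand]
      calc |_| ≤ |w 0 false * (f (Fin.cons false x) - f (Fin.cons false (Function.update x i b)))|
            + |w 0 true * (f (Fin.cons true x) - f (Fin.cons true (Function.update x i b)))| :=
            abs_add_le _ _
        _ = w 0 false * |f (Fin.cons false x) - f (Fin.cons false (Function.update x i b))|
            + w 0 true * |f (Fin.cons true x) - f (Fin.cons true (Function.update x i b))| := by
            rw [abs_mul, abs_mul, abs_of_nonneg (hw 0 false), abs_of_nonneg (hw 0 true)]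
        _ ≤ w 0 false * c + w 0 true * c := by
            exact add_le_add (mul_le_mul_of_nonneg_left h1 (hw 0 false))
              (mul_le_mul_of_nonneg_left h2 (hw 0 true))
        _ = c := by have := hw1 0; nlinarith
    -- pointwise two-point bound
    have key : ∀ x : Fin n → Bool,
        w 0 false * Real.exp (L * (f (Fin.cons false x) - m)) +
          w 0 true * Real.exp (L * (f (Fin.cons true x) - m)) ≤
        Real.exp (L ^ 2 * c ^ 2 / 8) * Real.exp (L * (f' x - m)) := by
      intro x
      set v0 : ℝ := f (Fin.cons false x) with hv0
      set v1 : ℝ := f (Fin.cons true x) with hv1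
      set q : ℝ := w 0 true with hq
      have hqsum : w 0 false + q = 1 := hw1 0
      have hq0 : 0 ≤ q := hw 0 true
      have hq1 : q ≤ 1 := by linarith [hw 0 false]
      have hwf : w 0 false = 1 - q := by linarith
      have hd : |v0 - v1| ≤ c := by
        have := hbd (Fin.cons false x) 0 true
        rwa [Fin.update_cons_zero] at this
      set d : ℝ := v1 - v0 with hdd
      have hfx : f' x = (1 - q) * v0 + q * v1 := by rw [hf'def]; rw [hwf]
      -- factor
      have e0 : L * (v0 - m) = L * (v0 - f' x) + L * (f' x - m) := by ring
      have e1 : L * (v1 - m) = L * (v1 - f' x) + L * (f' x - m) := by ring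
      rw [e0, e1, Real.exp_add, Real.exp_add, hwf]
      have tp : (1 - q) * Real.exp (L * (v0 - f' x)) + q * Real.exp (L * (v1 - f' x)) ≤
          Real.exp ((L * d) ^ 2 / 8) := by
        have h := two_point (1 - q) (L * d) (by linarith) (by linarith)
        have a0 : L * (v0 - f' x) = ((1 - q) - 1) * (L * d) := by rw [hfx]; ring
        have a1 : L * (v1 - f' x) = (1 - q) * (L * d) := by rw [hfx]; ring
        rw [a0, a1]
        have : (1 - (1 - q)) = q := by ring
        rw [this] at h
        exact h
      have tple : Real.exp ((L * d) ^ 2 / 8) ≤ Real.exp (L ^ 2 * c ^ 2 / 8) := by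
        apply Real.exp_le_exp.mpr
        have hd2 : d ^ 2 ≤ c ^ 2 := by
          have h1 : -c ≤ d := by have := abs_le.mp hd; linarith [this.2]
          have h2 : d ≤ c := by have := abs_le.mp hd; linarith [this.1]
          nlinarith
        have h5 := mul_le_mul_of_nonneg_left hd2 (sq_nonneg L)
        have h6 : (L * d) ^ 2 = L ^ 2 * d ^ 2 := by ring
        rw [h6]
        clear_value d v0 v1 q m f' w'
        linarith
      calc (1 - q) * (Real.exp (L * (v0 - f' x)) * Real.exp (L * (f' x - m))) +
            q * (Real.exp (L * (v1 - f' x)) * Real.exp (L * (f' x - m)))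
          = ((1 - q) * Real.exp (L * (v0 - f' x)) + q * Real.exp (L * (v1 - f' x))) *
              Real.exp (L * (f' x - m)) := by ring
        _ ≤ Real.exp ((L * d) ^ 2 / 8) * Real.exp (L * (f' x - m)) :=
            mul_le_mul_of_nonneg_right tp (Real.exp_pos _).le
        _ ≤ Real.exp (L ^ 2 * c ^ 2 / 8) * Real.exp (L * (f' x - m)) :=
            mul_le_mul_of_nonneg_right tple (Real.exp_pos _).le
    -- assemble
    calc Ex (n + 1) w (fun x => Real.exp (L * (f x - Ex (n + 1) w f)))
        = Ex n w' (fun x => w 0 false * Real.exp (L * (f (Fin.cons false x) - m)) +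
            w 0 true * Real.exp (L * (f (Fin.cons true x) - m))) := by
          rw [Ex_succ, hm]
      _ ≤ Ex n w' (fun x => Real.exp (L ^ 2 * c ^ 2 / 8) * Real.exp (L * (f' x - m))) :=
          Ex_mono hw'0 key
      _ = Real.exp (L ^ 2 * c ^ 2 / 8) *
            Ex n w' (fun x => Real.exp (L * (f' x - Ex n w' f'))) := by
          rw [Ex_smul, hmdef]
      _ ≤ Real.exp (L ^ 2 * c ^ 2 / 8) * Real.exp (L ^ 2 * n * c ^ 2 / 8) :=
          mul_le_mul_of_nonneg_left (ih w' hw'0 hw'1 f' c hc hbd' L) (Real.exp_pos _).le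
      _ = Real.exp (L ^ 2 * (n + 1 : ℕ) * c ^ 2 / 8) := by
          rw [← Real.exp_add]
          congr 1
          push_cast
          ring

lemma Ex_add {n : ℕ} (w : Fin n → Bool → ℝ) (g h : (Fin n → Bool) → ℝ) :
    Ex n w (fun x => g x + h x) = Ex n w g + Ex n w h := by
  simp only [Ex, mul_add, Finset.sum_add_distrib]

lemma Ex_neg {n : ℕ} (w : Fin n → Bool → ℝ) (g : (Fin n → Bool) → ℝ) :
    Ex n w (fun x => -g x) = -Ex n w g := by
  simp [Ex, ← Finset.sum_neg_distrib]

lemma chernoff (n : ℕ) (hn : 0 < n) (w : Fin n → Bool → ℝ) (hw : ∀ i b, 0 ≤ w i b)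
    (hw1 : ∀ i, w i false + w i true = 1) (f : (Fin n → Bool) → ℝ)
    (hf : ∀ x i b, |f x - f (Function.update x i b)| ≤ 1 / (n : ℝ))
    (ε : ℝ) (hε : 0 < ε) :
    Ex n w (fun x => if ε < f x - Ex n w f then (1:ℝ) else 0) ≤
      Real.exp (-2 * n * ε ^ 2) := by
  have hnR : (0:ℝ) < n := by exact_mod_cast hn
  set L : ℝ := 4 * n * ε with hL
  have hL0 : 0 ≤ L := by positivity
  set m : ℝ := Ex n w f with hm
  have pw : ∀ x, (if ε < f x - m then (1:ℝ) else 0) ≤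
      Real.exp (-(L * ε)) * Real.exp (L * (f x - m)) := by
    intro x
    by_cases h : ε < f x - m
    · simp only [h, if_true]
      rw [← Real.exp_add]
      apply Real.one_le_exp
      have := mul_le_mul_of_nonneg_left h.le hL0
      linarith
    · simp only [h, if_false]
      positivity
  calc Ex n w (fun x => if ε < f x - m then (1:ℝ) else 0)
      ≤ Ex n w (fun x => Real.exp (-(L * ε)) * Real.exp (L * (f x - m))) := Ex_mono hw pw
    _ = Real.exp (-(L * ε)) * Ex n w (fun x => Real.exp (L * (f x - m))) := Ex_smul w _ _
    _ ≤ Real.exp (-(L * ε)) * Real.exp (L ^ 2 * n * (1 / (n:ℝ)) ^ 2 / 8) :=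
        mul_le_mul_of_nonneg_left
          (mgf_bound n w hw hw1 f (1 / (n:ℝ)) (by positivity) hf L) (Real.exp_pos _).le
    _ = Real.exp (-2 * n * ε ^ 2) := by
        rw [← Real.exp_add]
        congr 1
        rw [hL]
        field_simp
        ring
lemma chernoff_two (n : ℕ) (hn : 0 < n) (w : Fin n → Bool → ℝ) (hw : ∀ i b, 0 ≤ w i b)
    (hw1 : ∀ i, w i false + w i true = 1) (f : (Fin n → Bool) → ℝ)
    (hf : ∀ x i b, |f x - f (Function.update x i b)| ≤ 1 / (n : ℝ))
    (ε : ℝ) (hε : 0 < ε) :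
    Ex n w (fun x => if ε < |f x - Ex n w f| then (1:ℝ) else 0) ≤
      2 * Real.exp (-2 * n * ε ^ 2) := by
  set m : ℝ := Ex n w f with hm
  have h1 := chernoff n hn w hw hw1 f hf ε hε
  have hf' : ∀ x i b, |(fun x => -f x) x - (fun x => -f x) (Function.update x i b)| ≤ 1 / (n:ℝ) := by
    intro x i b
    simp only
    rw [show -f x - -f (Function.update x i b) = -(f x - f (Function.update x i b)) by ring,
      abs_neg]
    exact hf x i b
  have h2 := chernoff n hn w hw hw1 (fun x => -f x) hf' ε hε
  rw [Ex_neg] at h2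
  have pw : ∀ x, (if ε < |f x - m| then (1:ℝ) else 0) ≤
      (if ε < f x - m then (1:ℝ) else 0) + (if ε < -f x - -m then (1:ℝ) else 0) := by
    intro x
    by_cases h : ε < |f x - m|
    · simp only [h, if_true]
      rcases abs_cases (f x - m) with ⟨he, _⟩ | ⟨he, _⟩
      · rw [he] at h
        simp only [h, if_true]
        have : (0:ℝ) ≤ if ε < -f x - -m then (1:ℝ) else 0 := by positivity
        linarith
      · rw [he] at h
        have h' : ε < -f x - -m := by linarith
        simp only [h', if_true]
        have : (0:ℝ) ≤ if ε < f x - m then (1:ℝ) else 0 := by positivity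
        linarith
    · simp only [h, if_false]
      positivity
  calc Ex n w (fun x => if ε < |f x - m| then (1:ℝ) else 0)
      ≤ Ex n w (fun x => (if ε < f x - m then (1:ℝ) else 0) +
          (if ε < -f x - -m then (1:ℝ) else 0)) := Ex_mono hw pw
    _ = Ex n w (fun x => if ε < f x - m then (1:ℝ) else 0) +
        Ex n w (fun x => if ε < -f x - -m then (1:ℝ) else 0) := Ex_add w _ _
    _ ≤ Real.exp (-2 * n * ε ^ 2) + Real.exp (-2 * n * ε ^ 2) := add_le_add h1 h2
    _ = 2 * Real.exp (-2 * n * ε ^ 2) := by ring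

end McDiarmidAux

/-- McDiarmid's inequality, special case: if `f : {0,1}^n → ℝ` changes by at most `1/n`
when one coordinate is changed, and `X 0, …, X (n-1)` are independent Boolean random
variables, then `P(|f(X) - E[f(X)]| > ε) ≤ 2 exp(-2 n ε²)`. -/
theorem stmt_2 {Ω : Type*} [MeasurableSpace Ω] (P : Measure Ω)
    [IsProbabilityMeasure P] (n : ℕ) (hn : 0 < n)
    (f : (Fin n → Bool) → ℝ)
    (hf : ∀ (x : Fin n → Bool) (i : Fin n) (b : Bool),
      |f x - f (Function.update x i b)| ≤ 1 / n)
    (X : Fin n → Ω → Bool)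
    (hmeas : ∀ i, Measurable (X i))
    (hindep : ProbabilityTheory.iIndepFun X P)
    (ε : ℝ) (hε : 0 < ε) :
    P {ω | ε < |f (fun i => X i ω) - ∫ ω', f (fun i => X i ω') ∂P|}
      ≤ ENNReal.ofReal (2 * Real.exp (-2 * n * ε ^ 2)) := by
  classical
  have hTm : Measurable (fun ω => (fun i => X i ω) : Ω → (Fin n → Bool)) :=
    measurable_pi_lambda _ hmeas
  set T : Ω → (Fin n → Bool) := fun ω i => X i ω with hT
  set ν : Measure (Fin n → Bool) := P.map T with hν
  haveI : IsProbabilityMeasure ν := Measure.isProbabilityMeasure_map hTm.aemeasurable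
  set w : Fin n → Bool → ℝ := fun i b => (P (X i ⁻¹' {b})).toReal with hwdef
  have hw : ∀ i b, 0 ≤ w i b := fun i b => ENNReal.toReal_nonneg
  have hw1 : ∀ i, w i false + w i true = 1 := by
    intro i
    have hdis : Disjoint (X i ⁻¹' {false}) (X i ⁻¹' {true}) := by
      apply Set.disjoint_left.mpr
      intro ω h1 h2
      simp only [Set.mem_preimage, Set.mem_singleton_iff] at h1 h2
      rw [h1] at h2
      exact Bool.noConfusion h2
    have hun : X i ⁻¹' {false} ∪ X i ⁻¹' {true} = Set.univ := by
      ext ω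
      simp only [Set.mem_union, Set.mem_preimage, Set.mem_singleton_iff, Set.mem_univ, iff_true]
      cases h : X i ω
      · left; rfl
      · right; rfl
    have hμ := measure_union (μ := P) hdis ((hmeas i) (measurableSet_singleton true))
    rw [hun, measure_univ] at hμ
    rw [hwdef]
    simp only
    rw [← ENNReal.toReal_add (measure_ne_top P (X i ⁻¹' {false})) (measure_ne_top P (X i ⁻¹' {true})),
      ← hμ]
    simp
  have hsing : ∀ x : Fin n → Bool, ν {x} = ∏ i, P (X i ⁻¹' {x i}) := by
    intro x
    rw [hν, Measure.map_apply hTm (measurableSet_singleton x)]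
    have hpre : T ⁻¹' {x} = ⋂ i ∈ Finset.univ, X i ⁻¹' {x i} := by
      ext ω
      simp [hT, funext_iff]
    rw [hpre,
      hindep.measure_inter_preimage_eq_mul Finset.univ (fun i _ => measurableSet_singleton (x i))]
  have hsingR : ∀ x : Fin n → Bool, (ν {x}).toReal = ∏ i, w i (x i) := by
    intro x
    rw [hsing x, ENNReal.toReal_prod]
  have hmeq : ∫ ω', f (fun i => X i ω') ∂P = Ex n w f := by
    have h1 : ∫ ω', f (fun i => X i ω') ∂P = ∫ x, f x ∂ν := by
      rw [hν, integral_map hTm.aemeasurable (measurable_of_finite f).aestronglyMeasurable]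
    rw [h1, integral_fintype (Integrable.of_finite (μ := ν) (f := f)), Ex]
    apply Finset.sum_congr rfl
    intro x _
    rw [measureReal_def, hsingR x, smul_eq_mul, mul_comm]
  set m : ℝ := Ex n w f with hm
  set S : Set (Fin n → Bool) := {x | ε < |f x - m|} with hS
  have hset : {ω | ε < |f (fun i => X i ω) - ∫ ω', f (fun i => X i ω') ∂P|} = T ⁻¹' S := by
    ext ω
    simp only [Set.mem_setOf_eq, Set.mem_preimage, hS, hT, hmeq]
  rw [hset, ← Measure.map_apply hTm (Set.to_countable S).measurableSet, ← hν]
  rw [ENNReal.le_ofReal_iff_toReal_le (measure_ne_top ν S) (by positivity)]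
  have hSsum : ν S = ∑ x ∈ Finset.univ.filter (· ∈ S), ν {x} := by
    have hcov : S = ⋃ x ∈ Finset.univ.filter (· ∈ S), ({x} : Set (Fin n → Bool)) := by
      ext y
      simp
    conv_lhs => rw [hcov]
    rw [measure_biUnion_finset ?_ (fun x _ => measurableSet_singleton x)]
    intro a _ b _ hab
    simp only [Function.onFun, Set.disjoint_singleton]
    exact hab
  have htR : (ν S).toReal = Ex n w (fun x => if ε < |f x - m| then (1:ℝ) else 0) := by
    rw [hSsum, ENNReal.toReal_sum (fun x _ => measure_ne_top ν _), Ex]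
    rw [Finset.sum_filter]
    apply Finset.sum_congr rfl
    intro x _
    by_cases hx : x ∈ S
    · rw [if_pos hx, if_pos (show ε < |f x - m| from hx), hsingR x, mul_one]
    · rw [if_neg hx, if_neg (show ¬ ε < |f x - m| from hx), mul_zero]
  rw [htR, hm]
  exact chernoff_two n hn w hw hw1 f hf ε hε
end

section
/- Let Ω = ℕ_{≥2}^ℕ with the product topology and T the left shift. Suppose Q ∈ Ω is such that: (i) for every finite word w over ℕ_{≥2}, the density d(w) of occurrences of w in Q exists; (ii) if d(w) = 0 then w does not occur in Q at all; and (iii) for every k, the sum of d(w) over all words w of length k equals 1. Then the sequence of empirical measures (1/N) Σ_{n=0}^{N−1} δ_{T^n Q} converges in the weak* topology to a T-invariant Borel probability measure μ on the orbit closure X of Q, Q is a generic point for μ, and μ assigns positive measure to every nonempty open subset of X. -/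
open Filter MeasureTheory Topology Set
open scoped ENNReal NNReal


/-- Cylinder set determined by a word of length `k`. -/
def cylSet (k : ℕ) (w : Fin k → ℕ) : Set (ℕ → ℕ) := {s | ∀ i : Fin k, s i = w i}

lemma measurableSet_cylSet (k : ℕ) (w : Fin k → ℕ) : MeasurableSet (cylSet k w) := by
  have : cylSet k w = ⋂ i : Fin k, (fun s : ℕ → ℕ => s (i : ℕ)) ⁻¹' {w i} := by
    ext s; simp [cylSet]
  rw [this]
  exact MeasurableSet.iInter fun i => (measurable_pi_apply _) (MeasurableSet.singleton _)

lemma isOpen_cylSet (k : ℕ) (w : Fin k → ℕ) : IsOpen (cylSet k w) := by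
  have : cylSet k w = ⋂ i : Fin k, (fun s : ℕ → ℕ => s (i : ℕ)) ⁻¹' {w i} := by
    ext s; simp [cylSet]
  rw [this]
  exact isOpen_iInter_of_finite fun i => (continuous_apply _).isOpen_preimage _ (isOpen_discrete _)

lemma mem_cylSet_self (x : ℕ → ℕ) (k : ℕ) : x ∈ cylSet k (fun i : Fin k => x i) :=
  fun _ => rfl

/-- basis lemma -/
lemma exists_cyl_subset {U : Set (ℕ → ℕ)} (hU : IsOpen U) {x : ℕ → ℕ} (hx : x ∈ U) :
    ∃ k : ℕ, cylSet k (fun i : Fin k => x i) ⊆ U := by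
  obtain ⟨I, u, hIu, hsub⟩ := isOpen_pi_iff.mp hU x hx
  rcases I.exists_le with ⟨K, hK⟩
  refine ⟨K + 1, fun s hs => hsub fun a ha => ?_⟩
  have hlt : a < K + 1 := Nat.lt_succ_of_le (hK a ha)
  have : s a = x a := hs ⟨a, hlt⟩
  rw [this]; exact (hIu a ha).2

/-- All words, as a sigma type. -/
abbrev Wd := Σ k : ℕ, Fin k → ℕ

def cylW (p : Wd) : Set (ℕ → ℕ) := cylSet p.1 p.2

/-- Decomposition of an open set into disjoint cylinders. -/
lemma open_decomp {G : Set (ℕ → ℕ)} (hG : IsOpen G) :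
    ∃ S : Set Wd, (∀ p ∈ S, cylW p ⊆ G) ∧ (G = ⋃ p ∈ S, cylW p) ∧
      S.Pairwise (Function.onFun Disjoint cylW) := by
  classical
  let P : (ℕ → ℕ) → ℕ → Prop := fun x k => cylSet k (fun i : Fin k => x i) ⊆ G
  have hex : ∀ x ∈ G, ∃ k, P x k := fun x hx => exists_cyl_subset hG hx
  let S : Set Wd := {p | ∃ x : ℕ → ℕ, ∃ hx : x ∈ G,
    p = ⟨Nat.find (hex x hx), fun i => x i⟩}
  have key : ∀ x, ∀ hx : x ∈ G, P x (Nat.find (hex x hx)) := fun x hx => Nat.find_spec (hex x hx)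
  refine ⟨S, ?_, ?_, ?_⟩
  · rintro p ⟨x, hx, rfl⟩
    exact key x hx
  · ext z
    constructor
    · intro hz
      refine mem_iUnion₂.mpr ⟨⟨Nat.find (hex z hz), fun i => z i⟩, ⟨z, hz, rfl⟩, ?_⟩
      exact mem_cylSet_self z _
    · intro hz
      rcases mem_iUnion₂.mp hz with ⟨p, hpS, hzp⟩
      rcases hpS with ⟨x, hx, rfl⟩
      exact key x hx hzp
  · intro p hp q hq hne
    obtain ⟨x, hx, rfl⟩ := hp
    obtain ⟨y, hy, rfl⟩ := hq
    rw [Function.onFun, Set.disjoint_left]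
    intro z hzx hzy
    apply hne
    -- wlog via cases on ≤
    have main : ∀ a b : ℕ → ℕ, ∀ ha : a ∈ G, ∀ hb : b ∈ G,
        Nat.find (hex a ha) ≤ Nat.find (hex b hb) →
        (∀ i : Fin (Nat.find (hex a ha)), z i = a i) →
        (∀ i : Fin (Nat.find (hex b hb)), z i = b i) →
        Nat.find (hex a ha) = Nat.find (hex b hb) := by
      intro a b ha hb hle hza hzb
      by_contra hne'
      have hlt : Nat.find (hex a ha) < Nat.find (hex b hb) := lt_of_le_of_ne hle hne'
      -- b has a smaller good cylinder: P b (Nat.find a), contradiction with minimality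
      have : P b (Nat.find (hex a ha)) := by
        have : (fun i : Fin (Nat.find (hex a ha)) => b (i : ℕ)) =
            (fun i : Fin (Nat.find (hex a ha)) => a (i : ℕ)) := by
          funext i
          rw [← hzb ⟨(i : ℕ), lt_trans i.2 hlt⟩, hza i]
        simpa [P, this] using key a ha
      exact Nat.find_min (hex b hb) hlt this
    have hk : Nat.find (hex x hx) = Nat.find (hex y hy) := by
      rcases le_total (Nat.find (hex x hx)) (Nat.find (hex y hy)) with h | h
      · exact main x y hx hy h hzx hzy
      · exact (main y x hy hx h hzy hzx).symm
    refine Sigma.ext hk ((Fin.heq_fun_iff hk).mpr ?_)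
    intro i
    rw [← hzx i, hzy ⟨(i : ℕ), hk ▸ i.2⟩]

section Counting
variable (Q : ℕ → ℕ)

def occW (k : ℕ) (w : Fin k → ℕ) (n : ℕ) : Prop := ∀ i : Fin k, Q (n + (i : ℕ)) = w i

instance (k : ℕ) (w : Fin k → ℕ) : DecidablePred (occW Q k w) := fun _ =>
  Fintype.decidableForallFintype

def cntI (k : ℕ) (w : Fin k → ℕ) (N : ℕ) : ℕ := ((Finset.Icc 1 N).filter (occW Q k w)).card
def cntR (k : ℕ) (w : Fin k → ℕ) (N : ℕ) : ℕ := ((Finset.range N).filter (occW Q k w)).card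

lemma ncard_occ (k : ℕ) (w : Fin k → ℕ) (N : ℕ) :
    {n : ℕ | 1 ≤ n ∧ n ≤ N ∧ ∀ i : Fin k, Q (n + (i : ℕ)) = w i}.ncard = cntI Q k w N := by
  have : {n : ℕ | 1 ≤ n ∧ n ≤ N ∧ ∀ i : Fin k, Q (n + (i : ℕ)) = w i}
      = ↑((Finset.Icc 1 N).filter (occW Q k w)) := by
    ext n; simp [occW, and_assoc]
  rw [this, Set.ncard_coe_finset]; rfl

lemma filter_card_le_of_subset_insert {s t : Finset ℕ} (a : ℕ) (p : ℕ → Prop) [DecidablePred p]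
    (h : s ⊆ insert a t) : (s.filter p).card ≤ (t.filter p).card + 1 := by
  have h1 : s.filter p ⊆ insert a (t.filter p) := by
    intro n hn
    rcases Finset.mem_filter.mp hn with ⟨hns, hpn⟩
    rcases Finset.mem_insert.mp (h hns) with rfl | hnt
    · exact Finset.mem_insert_self _ _
    · exact Finset.mem_insert_of_mem (Finset.mem_filter.mpr ⟨hnt, hpn⟩)
  exact le_trans (Finset.card_le_card h1) (Finset.card_insert_le _ _)

lemma cntI_le_cntR (k : ℕ) (w : Fin k → ℕ) (N : ℕ) : cntI Q k w N ≤ cntR Q k w N + 1 := by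
  refine filter_card_le_of_subset_insert N _ ?_
  intro n hn
  rcases Finset.mem_Icc.mp hn with ⟨_, h2⟩
  rcases eq_or_lt_of_le h2 with rfl | h
  · exact Finset.mem_insert_self _ _
  · exact Finset.mem_insert_of_mem (Finset.mem_range.mpr h)

lemma cntR_le_cntI (k : ℕ) (w : Fin k → ℕ) (N : ℕ) : cntR Q k w N ≤ cntI Q k w N + 1 := by
  refine filter_card_le_of_subset_insert 0 _ ?_
  intro n hn
  have h := Finset.mem_range.mp hn
  rcases Nat.eq_zero_or_pos n with rfl | hpos
  · exact Finset.mem_insert_self _ _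
  · exact Finset.mem_insert_of_mem (Finset.mem_Icc.mpr ⟨hpos, le_of_lt h⟩)

end Counting

section DensFacts

variable (Q : ℕ → ℕ) (dens : ∀ k : ℕ, (Fin k → ℕ) → ℝ)

/-- restated density hypothesis -/
def DensHyp : Prop := ∀ (k : ℕ) (w : Fin k → ℕ),
    Tendsto (fun N : ℕ => ((cntI Q k w N : ℝ)) / N) atTop (𝓝 (dens k w))

variable {Q dens}

lemma densHyp_of (h : ∀ (k : ℕ) (w : Fin k → ℕ),
    Tendsto (fun N : ℕ =>
      ({n : ℕ | 1 ≤ n ∧ n ≤ N ∧ ∀ i : Fin k, Q (n + (i : ℕ)) = w i}.ncard : ℝ) / N)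
      atTop (𝓝 (dens k w))) : DensHyp Q dens := by
  intro k w
  have := h k w
  simpa only [ncard_occ] using this

lemma tendsto_cntR (h : DensHyp Q dens) (k : ℕ) (w : Fin k → ℕ) :
    Tendsto (fun N : ℕ => ((cntR Q k w N : ℝ)) / N) atTop (𝓝 (dens k w)) := by
  have h0 : Tendsto (fun N : ℕ => (1 : ℝ) / N) atTop (𝓝 0) :=
    tendsto_one_div_atTop_nhds_zero_nat
  have hlo : Tendsto (fun N : ℕ => (cntI Q k w N : ℝ) / N - 1 / N) atTop (𝓝 (dens k w)) := by
    simpa using (h k w).sub h0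
  have hhi : Tendsto (fun N : ℕ => (cntI Q k w N : ℝ) / N + 1 / N) atTop (𝓝 (dens k w)) := by
    simpa using (h k w).add h0
  refine tendsto_of_tendsto_of_tendsto_of_le_of_le hlo hhi ?_ ?_
  · intro N
    rcases Nat.eq_zero_or_pos N with rfl | hN
    · simp
    have hN' : (0:ℝ) < N := by exact_mod_cast hN
    show (cntI Q k w N : ℝ) / N - 1 / N ≤ (cntR Q k w N : ℝ) / N
    rw [div_sub_div_same]
    have h1 := cntI_le_cntR Q k w N
    have h2 : (cntI Q k w N : ℝ) ≤ (cntR Q k w N : ℝ) + 1 := by exact_mod_cast h1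
    gcongr
    linarith
  · intro N
    rcases Nat.eq_zero_or_pos N with rfl | hN
    · simp
    have hN' : (0:ℝ) < N := by exact_mod_cast hN
    show (cntR Q k w N : ℝ) / N ≤ (cntI Q k w N : ℝ) / N + 1 / N
    rw [← add_div]
    have h1 := cntR_le_cntI Q k w N
    have h2 : (cntR Q k w N : ℝ) ≤ (cntI Q k w N : ℝ) + 1 := by exact_mod_cast h1
    gcongr

lemma dens_nonneg (h : DensHyp Q dens) (k : ℕ) (w : Fin k → ℕ) : 0 ≤ dens k w :=
  ge_of_tendsto' (h k w) fun N => by positivity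

lemma dens_zero (h : DensHyp Q dens) (w : Fin 0 → ℕ) : dens 0 w = 1 := by
  have h1 : Tendsto (fun N : ℕ => ((cntI Q 0 w N : ℝ)) / N) atTop (𝓝 1) := by
    have : ∀ᶠ N : ℕ in atTop, ((cntI Q 0 w N : ℝ)) / N = 1 := by
      filter_upwards [eventually_gt_atTop 0] with N hN
      have hc : cntI Q 0 w N = N := by
        have hf : (Finset.Icc 1 N).filter (occW Q 0 w) = Finset.Icc 1 N :=
          Finset.filter_true_of_mem (fun n _ => fun i : Fin 0 => i.elim0)
        show ((Finset.Icc 1 N).filter (occW Q 0 w)).card = N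
        rw [hf]; simp
      rw [hc, div_self (by exact_mod_cast hN.ne')]
    exact Tendsto.congr' (Filter.EventuallyEq.symm this) tendsto_const_nhds
  exact tendsto_nhds_unique (h 0 w) h1

lemma summable_dens (hone : ∀ k : ℕ, ∑' w : Fin k → ℕ, dens k w = 1) (k : ℕ) :
    Summable (dens k) := by
  by_contra hns
  have := hone k
  rw [tsum_eq_zero_of_not_summable hns] at this
  exact one_ne_zero this.symm

end DensFacts



section Consistency
variable {Q : ℕ → ℕ} {dens : ∀ k : ℕ, (Fin k → ℕ) → ℝ}

lemma occW_snoc_mono {k : ℕ} {w : Fin k → ℕ} {a n : ℕ}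
    (h : occW Q (k+1) (Fin.snoc w a) n) : occW Q k w n := by
  intro i
  have := h i.castSucc
  rwa [Fin.snoc_castSucc, Fin.coe_castSucc] at this

lemma occW_snoc_inj {k : ℕ} {w : Fin k → ℕ} {a b n : ℕ}
    (ha : occW Q (k+1) (Fin.snoc w a) n) (hb : occW Q (k+1) (Fin.snoc w b) n) : a = b := by
  have h1 := ha (Fin.last k); have h2 := hb (Fin.last k)
  rw [Fin.snoc_last] at h1 h2
  rw [← h1, ← h2]

lemma occW_cons_iff {k : ℕ} {w : Fin k → ℕ} {a n : ℕ} :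
    occW Q (k+1) (Fin.cons a w) n ↔ Q n = a ∧ occW Q k w (n+1) := by
  constructor
  · intro h
    constructor
    · have := h 0; simpa using this
    · intro i
      have := h i.succ
      rw [Fin.cons_succ] at this
      rw [← this, Fin.val_succ]
      ring_nf
  · rintro ⟨h1, h2⟩ i
    induction i using Fin.cases with
    | zero => simpa using h1
    | succ j =>
      rw [Fin.cons_succ, Fin.val_succ, ← h2 j]
      ring_nf

lemma sum_cnt_snoc_le (k : ℕ) (w : Fin k → ℕ) (N : ℕ) (S : Finset ℕ) :
    ∑ a ∈ S, cntI Q (k+1) (Fin.snoc w a) N ≤ cntI Q k w N := by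
  classical
  have hdisj : ∀ a ∈ S, ∀ b ∈ S, a ≠ b →
      Disjoint ((Finset.Icc 1 N).filter (occW Q (k+1) (Fin.snoc w a)))
               ((Finset.Icc 1 N).filter (occW Q (k+1) (Fin.snoc w b))) :=
    fun a _ b _ hab => Finset.disjoint_left.mpr (fun n hna hnb =>
      hab (occW_snoc_inj (Finset.mem_filter.mp hna).2 (Finset.mem_filter.mp hnb).2))
  rw [show (∑ a ∈ S, cntI Q (k+1) (Fin.snoc w a) N : ℕ)
      = ∑ a ∈ S, ((Finset.Icc 1 N).filter (occW Q (k+1) (Fin.snoc w a))).card from rfl,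
    ← Finset.card_biUnion hdisj]
  apply Finset.card_le_card
  intro n hn
  rcases Finset.mem_biUnion.mp hn with ⟨a, _, hna⟩
  rcases Finset.mem_filter.mp hna with ⟨hmem, hocc⟩
  exact Finset.mem_filter.mpr ⟨hmem, occW_snoc_mono hocc⟩

lemma sum_cnt_cons_le (k : ℕ) (w : Fin k → ℕ) (N : ℕ) (S : Finset ℕ) :
    ∑ a ∈ S, cntI Q (k+1) (Fin.cons a w) N ≤ cntI Q k w N + 1 := by
  classical
  have hdisj : ∀ a ∈ S, ∀ b ∈ S, a ≠ b →
      Disjoint ((Finset.Icc 1 N).filter (occW Q (k+1) (Fin.cons a w)))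
               ((Finset.Icc 1 N).filter (occW Q (k+1) (Fin.cons b w))) :=
    fun a _ b _ hab => Finset.disjoint_left.mpr (fun n hna hnb => by
      have h1 := (occW_cons_iff.mp (Finset.mem_filter.mp hna).2).1
      have h2 := (occW_cons_iff.mp (Finset.mem_filter.mp hnb).2).1
      exact hab (h1 ▸ h2 ▸ rfl))
  rw [show (∑ a ∈ S, cntI Q (k+1) (Fin.cons a w) N : ℕ)
      = ∑ a ∈ S, ((Finset.Icc 1 N).filter (occW Q (k+1) (Fin.cons a w))).card from rfl,
    ← Finset.card_biUnion hdisj]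
  set A := (S.biUnion (fun a => (Finset.Icc 1 N).filter (occW Q (k+1) (Fin.cons a w)))) with hA
  have hinj : Function.Injective (fun n : ℕ => n + 1) := add_left_injective 1
  rw [← Finset.card_image_of_injective A hinj]
  set B := A.image (fun n => n + 1) with hB
  have hsub : B ⊆ insert (N+1) (Finset.Icc 1 N) := by
    intro m hm
    rcases Finset.mem_image.mp hm with ⟨n, hn, rfl⟩
    rcases Finset.mem_biUnion.mp hn with ⟨a, _, hna⟩
    rcases Finset.mem_Icc.mp (Finset.mem_filter.mp hna).1 with ⟨h1, h2⟩
    rcases eq_or_lt_of_le h2 with rfl | h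
    · exact Finset.mem_insert_self _ _
    · exact Finset.mem_insert_of_mem (Finset.mem_Icc.mpr ⟨by omega, by omega⟩)
  have hocc : ∀ m ∈ B, occW Q k w m := by
    intro m hm
    rcases Finset.mem_image.mp hm with ⟨n, hn, rfl⟩
    rcases Finset.mem_biUnion.mp hn with ⟨a, _, hna⟩
    exact (occW_cons_iff.mp (Finset.mem_filter.mp hna).2).2
  calc B.card = (B.filter (occW Q k w)).card := by rw [Finset.filter_true_of_mem hocc]
    _ ≤ ((Finset.Icc 1 N).filter (occW Q k w)).card + 1 :=
        filter_card_le_of_subset_insert (N+1) _ hsub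
    _ = cntI Q k w N + 1 := rfl

lemma sum_dens_snoc_le (h : DensHyp Q dens) (k : ℕ) (w : Fin k → ℕ) (S : Finset ℕ) :
    ∑ a ∈ S, dens (k+1) (Fin.snoc w a) ≤ dens k w := by
  refine le_of_tendsto_of_tendsto' (tendsto_finset_sum S (fun a _ => h (k+1) (Fin.snoc w a)))
    (h k w) (fun N => ?_)
  rw [← Finset.sum_div]
  have hle := sum_cnt_snoc_le (Q := Q) k w N S
  apply div_le_div_of_nonneg_right ?_ (Nat.cast_nonneg _)
  exact_mod_cast hle

lemma sum_dens_cons_le (h : DensHyp Q dens) (k : ℕ) (w : Fin k → ℕ) (S : Finset ℕ) :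
    ∑ a ∈ S, dens (k+1) (Fin.cons a w) ≤ dens k w := by
  have h0 : Tendsto (fun N : ℕ => (1 : ℝ) / N) atTop (𝓝 0) :=
    tendsto_one_div_atTop_nhds_zero_nat
  have hhi : Tendsto (fun N : ℕ => (cntI Q k w N : ℝ) / N + 1 / N) atTop (𝓝 (dens k w)) := by
    simpa using (h k w).add h0
  refine le_of_tendsto_of_tendsto' (tendsto_finset_sum S (fun a _ => h (k+1) (Fin.cons a w)))
    hhi (fun N => ?_)
  rw [← Finset.sum_div, ← add_div]
  have hle := sum_cnt_cons_le (Q := Q) k w N S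
  apply div_le_div_of_nonneg_right ?_ (Nat.cast_nonneg _)
  exact_mod_cast hle

/-- snoc equiv -/
def snocEquiv (k : ℕ) : ((Fin k → ℕ) × ℕ) ≃ (Fin (k+1) → ℕ) where
  toFun p := Fin.snoc p.1 p.2
  invFun w := (Fin.init w, w (Fin.last k))
  left_inv p := by simp
  right_inv w := by simp [Fin.snoc_init_self]

def consEquiv' (k : ℕ) : ((Fin k → ℕ) × ℕ) ≃ (Fin (k+1) → ℕ) where
  toFun p := Fin.cons p.2 p.1
  invFun w := (Fin.tail w, w 0)
  left_inv p := by simp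
  right_inv w := by simp [Fin.cons_self_tail]

lemma summable_dens_snoc (hone : ∀ k : ℕ, ∑' w : Fin k → ℕ, dens k w = 1) (k : ℕ)
    (w : Fin k → ℕ) : Summable (fun a => dens (k+1) (Fin.snoc w a)) := by
  have h1 : Summable ((dens (k+1)) ∘ (snocEquiv k)) :=
    (summable_dens hone (k+1)).comp_injective (snocEquiv k).injective
  exact h1.prod_factor w

lemma summable_dens_cons (hone : ∀ k : ℕ, ∑' w : Fin k → ℕ, dens k w = 1) (k : ℕ)
    (w : Fin k → ℕ) : Summable (fun a => dens (k+1) (Fin.cons a w)) := by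
  have h1 : Summable ((dens (k+1)) ∘ (consEquiv' k)) :=
    (summable_dens hone (k+1)).comp_injective (consEquiv' k).injective
  exact h1.prod_factor w

/-- termwise equality from tsums -/
lemma eq_of_le_of_tsum_eq {ι : Type*} {f g : ι → ℝ} (hf : Summable f) (hg : Summable g)
    (hle : ∀ i, f i ≤ g i) (heq : ∑' i, f i = ∑' i, g i) : ∀ i, f i = g i := by
  intro i
  by_contra hne
  have hlt : f i < g i := lt_of_le_of_ne (hle i) hne
  have hsub : Summable (fun j => g j - f j) := hg.sub hf
  have h0 : ∑' j, (g j - f j) = 0 := by rw [Summable.tsum_sub hg hf, heq, sub_self]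
  have hpos : g i - f i ≤ ∑' j, (g j - f j) :=
    Summable.le_tsum hsub i (fun j _ => sub_nonneg.mpr (hle j))
  rw [h0] at hpos
  linarith

lemma tsum_dens_comp_eq (hone : ∀ k : ℕ, ∑' w : Fin k → ℕ, dens k w = 1) (k : ℕ)
    (e : ((Fin k → ℕ) × ℕ) ≃ (Fin (k+1) → ℕ)) :
    ∑' w : Fin k → ℕ, ∑' a : ℕ, dens (k+1) (e (w, a)) = 1 := by
  have hs : Summable ((dens (k+1)) ∘ e) := (summable_dens hone (k+1)).comp_injective e.injective
  have h2 := Summable.tsum_prod' hs (fun w => hs.prod_factor w)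
  simp only [Function.comp_apply] at h2
  rw [← h2]
  rw [e.tsum_eq (dens (k+1))]
  exact hone (k+1)

lemma hasSum_dens_snoc (h : DensHyp Q dens) (hone : ∀ k : ℕ, ∑' w : Fin k → ℕ, dens k w = 1)
    (k : ℕ) (w : Fin k → ℕ) :
    HasSum (fun a => dens (k+1) (Fin.snoc w a)) (dens k w) := by
  have hsum := summable_dens_snoc (dens := dens) hone k w
  rw [hsum.hasSum_iff]
  have hf : Summable (fun w : Fin k → ℕ => ∑' a, dens (k+1) (Fin.snoc w a)) :=
    Summable.of_nonneg_of_le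
      (fun v => tsum_nonneg (fun a => dens_nonneg h (k+1) _))
      (fun v => Summable.tsum_le_of_sum_le (summable_dens_snoc hone k v) (fun S => sum_dens_snoc_le h k v S))
      (summable_dens hone k)
  refine eq_of_le_of_tsum_eq hf (summable_dens hone k)
    (fun v => Summable.tsum_le_of_sum_le (summable_dens_snoc hone k v)
      (fun S => sum_dens_snoc_le h k v S)) ?_ w
  rw [hone k]
  exact tsum_dens_comp_eq hone k (snocEquiv k)

lemma hasSum_dens_cons (h : DensHyp Q dens) (hone : ∀ k : ℕ, ∑' w : Fin k → ℕ, dens k w = 1)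
    (k : ℕ) (w : Fin k → ℕ) :
    HasSum (fun a => dens (k+1) (Fin.cons a w)) (dens k w) := by
  have hsum := summable_dens_cons (dens := dens) hone k w
  rw [hsum.hasSum_iff]
  have hf : Summable (fun w : Fin k → ℕ => ∑' a, dens (k+1) (Fin.cons a w)) :=
    Summable.of_nonneg_of_le
      (fun v => tsum_nonneg (fun a => dens_nonneg h (k+1) _))
      (fun v => Summable.tsum_le_of_sum_le (summable_dens_cons hone k v) (fun S => sum_dens_cons_le h k v S))
      (summable_dens hone k)
  refine eq_of_le_of_tsum_eq hf (summable_dens hone k)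
    (fun v => Summable.tsum_le_of_sum_le (summable_dens_cons hone k v)
      (fun S => sum_dens_cons_le h k v S)) ?_ w
  rw [hone k]
  exact tsum_dens_comp_eq hone k (consEquiv' k)

end Consistency



section Construction

variable (d : ∀ k : ℕ, (Fin k → ℕ) → ℝ)

noncomputable def LF : (k : ℕ) → (Fin k → ℕ) → ℝ
  | 0, _ => 0
  | (k+1), w => LF k (Fin.init w) +
      ∑ b ∈ Finset.range (w (Fin.last k)), d (k+1) (Fin.snoc (Fin.init w) b)

noncomputable def cfun (k : ℕ) (u : Fin k → ℕ) (a : ℕ) : ℝ :=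
  LF d k u + ∑ b ∈ Finset.range (a+1), d (k+1) (Fin.snoc u b)

noncomputable def pickA (c : ℕ → ℝ) (x : ℝ) : ℕ := sInf {a : ℕ | x < c a}

noncomputable def wseq (x : ℝ) : (k : ℕ) → Fin k → ℕ
  | 0 => fun i => i.elim0
  | (k+1) => Fin.snoc (wseq x k) (pickA (cfun d k (wseq x k)) x)

noncomputable def phiF (x : ℝ) (n : ℕ) : ℕ := wseq d x (n+1) (Fin.last n)

lemma LF_snoc (k : ℕ) (w : Fin k → ℕ) (a : ℕ) :
    LF d (k+1) (Fin.snoc w a) = LF d k w + ∑ b ∈ Finset.range a, d (k+1) (Fin.snoc w b) := by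
  simp only [LF, Fin.init_snoc, Fin.snoc_last]

lemma pickA_eq {c : ℕ → ℝ} {x : ℝ} {a : ℕ} (h1 : x < c a) (h2 : ∀ b < a, c b ≤ x) :
    pickA c x = a := by
  have hne : {b : ℕ | x < c b}.Nonempty := ⟨a, h1⟩
  have hmem : pickA c x ∈ {b : ℕ | x < c b} := Nat.sInf_mem hne
  have hle : pickA c x ≤ a := Nat.sInf_le h1
  rcases lt_or_eq_of_le hle with hlt | heq
  · exact absurd hmem (not_lt.mpr (h2 _ hlt))
  · exact heq

lemma measurable_pickA (c : ℕ → ℝ) : Measurable (pickA c) := by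
  apply measurable_to_countable'
  intro a
  have heq : pickA c ⁻¹' {a} =
      ({x : ℝ | x < c a ∧ ∀ b < a, c b ≤ x} ∪ {x : ℝ | (∀ b, c b ≤ x) ∧ a = 0}) := by
    ext x
    simp only [mem_preimage, mem_singleton_iff, mem_union, mem_setOf_eq]
    constructor
    · intro hx
      by_cases hex : {b : ℕ | x < c b}.Nonempty
      · left
        have hmem := Nat.sInf_mem hex
        rw [show sInf {b : ℕ | x < c b} = pickA c x from rfl, hx] at hmem
        refine ⟨hmem, fun b hb => not_lt.mp (fun hlt => ?_)⟩
        have := Nat.sInf_le (show b ∈ {b : ℕ | x < c b} from hlt)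
        rw [show sInf {b : ℕ | x < c b} = pickA c x from rfl, hx] at this
        omega
      · right
        rw [Set.not_nonempty_iff_eq_empty] at hex
        have h0' : pickA c x = 0 := by rw [pickA, hex, Nat.sInf_empty]
        refine ⟨fun b => not_lt.mp (fun hlt => ?_), by rw [← hx, h0']⟩
        rw [Set.eq_empty_iff_forall_notMem] at hex
        exact hex b hlt
    · rintro (⟨h1, h2⟩ | ⟨hall, rfl⟩)
      · exact pickA_eq h1 h2
      · have hex : {b : ℕ | x < c b} = ∅ := Set.eq_empty_iff_forall_notMem.mpr
          (fun b hb => absurd hb (not_lt.mpr (hall b)))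
        rw [pickA, hex, Nat.sInf_empty]
  rw [heq]
  apply MeasurableSet.union
  · have : {x : ℝ | x < c a ∧ ∀ b < a, c b ≤ x}
        = Iio (c a) ∩ ⋂ b, ⋂ (_ : b < a), Ici (c b) := by
      ext x; simp [and_comm]
    rw [this]
    exact measurableSet_Iio.inter (MeasurableSet.iInter fun b =>
      MeasurableSet.iInter fun _ => measurableSet_Ici)
  · rcases eq_or_ne a 0 with rfl | ha
    · have : {x : ℝ | (∀ b, c b ≤ x) ∧ (0:ℕ) = 0} = ⋂ b, Ici (c b) := by ext x; simp
      rw [this]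
      exact MeasurableSet.iInter fun b => measurableSet_Ici
    · have : {x : ℝ | (∀ b, c b ≤ x) ∧ a = 0} = ∅ := by
        ext x; simp [ha]
      rw [this]; exact MeasurableSet.empty

lemma measurable_wseq : ∀ k : ℕ, Measurable (fun x : ℝ => wseq d x k)
  | 0 => measurable_const
  | (k+1) => by
    apply measurable_to_countable'
    intro w
    have heq : (fun x : ℝ => wseq d x (k+1)) ⁻¹' {w} =
        ((fun x : ℝ => wseq d x k) ⁻¹' {Fin.init w}) ∩
          {x : ℝ | pickA (cfun d k (Fin.init w)) x = w (Fin.last k)} := by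
      ext x
      simp only [mem_preimage, mem_singleton_iff, mem_inter_iff, mem_setOf_eq]
      constructor
      · intro hx
        have hrfl : wseq d x (k+1) = Fin.snoc (wseq d x k) (pickA (cfun d k (wseq d x k)) x) := rfl
        have h1 : wseq d x k = Fin.init w := by
          rw [← hx, hrfl, Fin.init_snoc]
        have h2' : pickA (cfun d k (wseq d x k)) x = w (Fin.last k) := by
          rw [← hx, hrfl, Fin.snoc_last]
        refine ⟨h1, ?_⟩
        rw [← h1]
        exact h2' 
      · rintro ⟨h1, h2⟩
        show Fin.snoc (wseq d x k) (pickA (cfun d k (wseq d x k)) x) = w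
        rw [h1, h2, Fin.snoc_init_self]
    rw [heq]
    exact ((measurable_wseq k) (measurableSet_singleton _)).inter
      ((measurable_pickA _) (measurableSet_singleton _))

lemma measurable_phiF : Measurable (phiF d) :=
  measurable_pi_lambda _ (fun n => (measurable_pi_apply (Fin.last n)).comp (measurable_wseq d (n+1)))

variable {d}
variable (hnn : ∀ (k : ℕ) (w : Fin k → ℕ), 0 ≤ d k w)
variable (hs : ∀ (k : ℕ) (w : Fin k → ℕ), HasSum (fun a => d (k+1) (Fin.snoc w a)) (d k w))
variable (h0 : ∀ w : Fin 0 → ℕ, d 0 w = 1)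

include hnn hs in
lemma sum_range_le (k : ℕ) (w : Fin k → ℕ) (m : ℕ) :
    ∑ b ∈ Finset.range m, d (k+1) (Fin.snoc w b) ≤ d k w :=
  sum_le_hasSum _ (fun i _ => hnn _ _) (hs k w)

include hnn hs h0 in
lemma wseq_mem {x : ℝ} (hx : x ∈ Set.Ico (0:ℝ) 1) (k : ℕ) :
    LF d k (wseq d x k) ≤ x ∧ x < LF d k (wseq d x k) + d k (wseq d x k) := by
  induction k with
  | zero =>
    refine ⟨hx.1, ?_⟩
    show x < 0 + d 0 _
    rw [h0, zero_add]; exact hx.2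
  | succ k ih =>
    obtain ⟨hl, hr⟩ := ih
    set u := wseq d x k with hu
    have hex : ∃ a, x < cfun d k u a := by
      have ht := (hs k u).tendsto_sum_nat
      have hev : ∀ᶠ n in atTop,
          x - LF d k u < ∑ b ∈ Finset.range n, d (k+1) (Fin.snoc u b) :=
        ht.eventually (eventually_gt_nhds (by linarith))
      obtain ⟨n, hn⟩ := hev.exists
      refine ⟨n, ?_⟩
      have hmono : ∑ b ∈ Finset.range n, d (k+1) (Fin.snoc u b)
          ≤ ∑ b ∈ Finset.range (n+1), d (k+1) (Fin.snoc u b) :=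
        Finset.sum_le_sum_of_subset_of_nonneg
          (Finset.range_subset_range.mpr (Nat.le_succ n)) (fun i _ _ => hnn _ _)
      show x < LF d k u + ∑ b ∈ Finset.range (n+1), d (k+1) (Fin.snoc u b)
      linarith
    set a := pickA (cfun d k u) x with ha
    have hne : {b : ℕ | x < cfun d k u b}.Nonempty := hex
    have spec1 : x < cfun d k u a := Nat.sInf_mem hne
    have spec2 : ∀ b < a, ¬ x < cfun d k u b := fun b hb => Nat.notMem_of_lt_sInf hb
    show LF d (k+1) (Fin.snoc u a) ≤ x ∧ x < LF d (k+1) (Fin.snoc u a) + d (k+1) (Fin.snoc u a)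
    have hkey : LF d (k+1) (Fin.snoc u a) + d (k+1) (Fin.snoc u a) = cfun d k u a := by
      rw [LF_snoc, cfun, Finset.sum_range_succ]; ring
    constructor
    · rw [LF_snoc]
      rcases Nat.eq_zero_or_pos a with ha0 | hpos
      · rw [ha0]; simpa using hl
      · have hm := not_lt.mp (spec2 (a-1) (by omega))
        have hc : cfun d k u (a-1) = LF d k u + ∑ b ∈ Finset.range a, d (k+1) (Fin.snoc u b) := by
          have hone' : a - 1 + 1 = a := by omega
          rw [cfun, hone']
        rw [hc] at hm
        exact hm
    · rw [hkey]; exact spec1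

include hnn hs in
lemma LF_le_LF_snoc (k : ℕ) (w : Fin k → ℕ) (a : ℕ) :
    LF d k w ≤ LF d (k+1) (Fin.snoc w a) := by
  rw [LF_snoc]
  have : (0:ℝ) ≤ ∑ b ∈ Finset.range a, d (k+1) (Fin.snoc w b) :=
    Finset.sum_nonneg (fun b _ => hnn _ _)
  linarith

include hnn hs in
lemma LF_snoc_add_le (k : ℕ) (w : Fin k → ℕ) (a : ℕ) :
    LF d (k+1) (Fin.snoc w a) + d (k+1) (Fin.snoc w a) ≤ LF d k w + d k w := by
  rw [LF_snoc, add_assoc, ← Finset.sum_range_succ]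
  have := sum_range_le hnn hs k w (a+1)
  linarith

include hnn hs h0 in
lemma LF_bounds : ∀ (k : ℕ) (w : Fin k → ℕ), 0 ≤ LF d k w ∧ LF d k w + d k w ≤ 1 := by
  intro k
  induction k with
  | zero =>
    intro w
    refine ⟨le_refl _, ?_⟩
    show (0:ℝ) + d 0 w ≤ 1
    rw [h0, zero_add]
  | succ k ih =>
    intro w
    have hw : Fin.snoc (Fin.init w) (w (Fin.last k)) = w := Fin.snoc_init_self w
    obtain ⟨h1, h2⟩ := ih (Fin.init w)
    constructor
    · rw [← hw]
      exact le_trans h1 (LF_le_LF_snoc hnn hs _ _ _)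
    · rw [← hw]
      exact le_trans (LF_snoc_add_le hnn hs _ _ _) h2

include hnn hs h0 in
lemma wseq_eq_iff {x : ℝ} (hx : x ∈ Set.Ico (0:ℝ) 1) (k : ℕ) :
    ∀ w : Fin k → ℕ, wseq d x k = w ↔ x ∈ Set.Ico (LF d k w) (LF d k w + d k w) := by
  induction k with
  | zero =>
    intro w
    constructor
    · rintro rfl
      exact ⟨(wseq_mem hnn hs h0 hx 0).1, (wseq_mem hnn hs h0 hx 0).2⟩
    · intro _
      funext i
      exact i.elim0
  | succ k ih =>
    intro w
    constructor
    · rintro rfl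
      exact ⟨(wseq_mem hnn hs h0 hx (k+1)).1, (wseq_mem hnn hs h0 hx (k+1)).2⟩
    · intro hxw
      set v := Fin.init w with hv
      set a := w (Fin.last k) with haw
      have hw : Fin.snoc v a = w := Fin.snoc_init_self w
      rw [← hw] at hxw
      have hinit : x ∈ Set.Ico (LF d k v) (LF d k v + d k v) := by
        refine ⟨le_trans (LF_le_LF_snoc hnn hs k v a) hxw.1, ?_⟩
        exact lt_of_lt_of_le hxw.2 (LF_snoc_add_le hnn hs k v a)
      have hveq : wseq d x k = v := (ih v).mpr hinit
      have hp : pickA (cfun d k v) x = a := by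
        apply pickA_eq
        · show x < LF d k v + ∑ b ∈ Finset.range (a+1), d (k+1) (Fin.snoc v b)
          have heq2 : LF d (k+1) (Fin.snoc v a) + d (k+1) (Fin.snoc v a)
              = LF d k v + ∑ b ∈ Finset.range (a+1), d (k+1) (Fin.snoc v b) := by
            rw [LF_snoc, Finset.sum_range_succ]; ring
          rw [← heq2]
          exact hxw.2
        · intro b hb
          show LF d k v + ∑ c ∈ Finset.range (b+1), d (k+1) (Fin.snoc v c) ≤ x
          have hsub : ∑ c ∈ Finset.range (b+1), d (k+1) (Fin.snoc v c)
              ≤ ∑ c ∈ Finset.range a, d (k+1) (Fin.snoc v c) :=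
            Finset.sum_le_sum_of_subset_of_nonneg
              (Finset.range_subset_range.mpr (by omega)) (fun i _ _ => hnn _ _)
          have hLa : LF d (k+1) (Fin.snoc v a) = LF d k v + ∑ c ∈ Finset.range a, d (k+1) (Fin.snoc v c) :=
            LF_snoc d k v a
          have h1' := hxw.1
          rw [hLa] at h1'
          linarith
      show Fin.snoc (wseq d x k) (pickA (cfun d k (wseq d x k)) x) = w
      rw [hveq, hp, hw]

lemma wseq_apply (x : ℝ) : ∀ (k : ℕ) (i : Fin k), wseq d x k i = phiF d x (i : ℕ) := by
  intro k
  induction k with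
  | zero => exact fun i => i.elim0
  | succ k ih =>
    intro i
    induction i using Fin.lastCases with
    | last => rfl
    | cast j =>
      rw [show wseq d x (k+1) = Fin.snoc (wseq d x k) (pickA (cfun d k (wseq d x k)) x) from rfl,
        Fin.snoc_castSucc, Fin.coe_castSucc]
      exact ih j

include hnn hs h0 in
lemma phiF_preimage (k : ℕ) (w : Fin k → ℕ) :
    phiF d ⁻¹' (cylSet k w) ∩ Set.Ico 0 1 = Set.Ico (LF d k w) (LF d k w + d k w) := by
  ext x
  constructor
  · rintro ⟨hphi, hx⟩
    have hwe : wseq d x k = w := funext fun i => by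
      rw [wseq_apply]; exact hphi i
    exact (wseq_eq_iff hnn hs h0 hx k w).mp hwe
  · intro hx'
    have hb := LF_bounds hnn hs h0 k w
    have hx : x ∈ Set.Ico (0:ℝ) 1 := ⟨le_trans hb.1 hx'.1, lt_of_lt_of_le hx'.2 hb.2⟩
    have hwe : wseq d x k = w := (wseq_eq_iff hnn hs h0 hx k w).mpr hx'
    refine ⟨fun i => ?_, hx⟩
    rw [← wseq_apply x k i, hwe]

noncomputable def muM (d : ∀ k : ℕ, (Fin k → ℕ) → ℝ) : Measure (ℕ → ℕ) :=
  Measure.map (phiF d) (MeasureTheory.volume.restrict (Set.Ico 0 1))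

include hnn hs h0 in
lemma muM_cyl (k : ℕ) (w : Fin k → ℕ) :
    muM d (cylSet k w) = ENNReal.ofReal (d k w) := by
  rw [muM, Measure.map_apply (measurable_phiF d) (measurableSet_cylSet k w),
    Measure.restrict_apply ((measurable_phiF d) (measurableSet_cylSet k w)),
    phiF_preimage hnn hs h0 k w, Real.volume_Ico, add_sub_cancel_left]

instance muM_prob (d : ∀ k : ℕ, (Fin k → ℕ) → ℝ) : IsProbabilityMeasure (muM d) := by
  constructor
  rw [muM, Measure.map_apply (measurable_phiF d) MeasurableSet.univ]
  simp [Real.volume_Ico]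

end Construction



/-! ## Part 5 -/

/-- the canonical shift -/
def Tsh : (ℕ → ℕ) → (ℕ → ℕ) := fun s n => s (n + 1)

lemma Tsh_iterate (n : ℕ) (s : ℕ → ℕ) (i : ℕ) : (Tsh^[n] s) i = s (n + i) := by
  induction n generalizing i s with
  | zero => simp
  | succ n ih =>
    rw [Function.iterate_succ_apply, ih]
    show s (n + i + 1) = s (n + 1 + i)
    congr 1; omega

lemma measurable_Tsh : Measurable Tsh :=
  measurable_pi_lambda _ (fun n => measurable_pi_apply (n + 1))

lemma iterate_mem_cylSet_iff (Q : ℕ → ℕ) (k : ℕ) (w : Fin k → ℕ) (n : ℕ) :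
    Tsh^[n] Q ∈ cylSet k w ↔ occW Q k w n := by
  unfold cylSet occW
  simp only [mem_setOf_eq]
  constructor
  · intro h i; rw [← h i, Tsh_iterate]
  · intro h i; rw [Tsh_iterate]; exact h i

section Empirical
variable (Q : ℕ → ℕ)

/-- empirical measure -/
noncomputable def emp (N : ℕ) : Measure (ℕ → ℕ) :=
  ((N : ℝ≥0∞))⁻¹ • ∑ n ∈ Finset.range N, Measure.dirac (Tsh^[n] Q)

open Classical in
lemma emp_apply (N : ℕ) {s : Set (ℕ → ℕ)} (hs : MeasurableSet s) :
    emp Q N s = (((Finset.range N).filter (fun n => Tsh^[n] Q ∈ s)).card : ℝ≥0∞) / N := by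
  classical
  rw [emp, Measure.smul_apply, Measure.finset_sum_apply, smul_eq_mul]
  have : ∀ n, Measure.dirac (Tsh^[n] Q) s = if Tsh^[n] Q ∈ s then (1:ℝ≥0∞) else 0 := by
    intro n
    rw [Measure.dirac_apply' _ hs, Set.indicator_apply]
    rfl
  rw [Finset.sum_congr rfl (fun n _ => this n), Finset.sum_boole]
  rw [ENNReal.div_eq_inv_mul]

lemma emp_cyl (N k : ℕ) (w : Fin k → ℕ) :
    emp Q N (cylSet k w) = (cntR Q k w N : ℝ≥0∞) / N := by
  classical
  rw [emp_apply Q N (measurableSet_cylSet k w), cntR]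
  have heq : (Finset.range N).filter (fun n => Tsh^[n] Q ∈ cylSet k w)
      = (Finset.range N).filter (occW Q k w) :=
    Finset.filter_congr (fun n _ => by exact iterate_mem_cylSet_iff Q k w n)
  rw [heq]

instance emp_prob (N : ℕ) : IsProbabilityMeasure (emp Q (N + 1)) := by
  constructor
  rw [emp, Measure.smul_apply, Measure.finset_sum_apply, smul_eq_mul]
  have hall : ∀ n ∈ Finset.range (N+1), Measure.dirac (Tsh^[n] Q) (univ : Set (ℕ → ℕ)) = 1 :=
    fun n _ => by simp
  rw [Finset.sum_congr rfl hall, Finset.sum_const, Finset.card_range, nsmul_eq_mul, mul_one]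
  exact ENNReal.inv_mul_cancel (by simp) (by simp)

variable {Q : ℕ → ℕ} {dens : ∀ k : ℕ, (Fin k → ℕ) → ℝ}

lemma tendsto_emp_cyl (h : DensHyp Q dens) (k : ℕ) (w : Fin k → ℕ) :
    Tendsto (fun N : ℕ => emp Q N (cylSet k w)) atTop (𝓝 (ENNReal.ofReal (dens k w))) := by
  have h1 : Tendsto (fun N : ℕ => ENNReal.ofReal ((cntR Q k w N : ℝ) / N)) atTop
      (𝓝 (ENNReal.ofReal (dens k w))) := ENNReal.tendsto_ofReal (tendsto_cntR h k w)
  apply h1.congr'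
  filter_upwards [eventually_gt_atTop 0] with N hN
  rw [emp_cyl, ENNReal.ofReal_div_of_pos (by exact_mod_cast hN)]
  congr 1
  · rw [ENNReal.ofReal_natCast]
  · rw [ENNReal.ofReal_natCast]

end Empirical

section Weak

variable {Q : ℕ → ℕ} {dens : ∀ k : ℕ, (Fin k → ℕ) → ℝ}
variable (hnn : ∀ (k : ℕ) (w : Fin k → ℕ), 0 ≤ dens k w)
variable (hsn : ∀ (k : ℕ) (w : Fin k → ℕ), HasSum (fun a => dens (k+1) (Fin.snoc w a)) (dens k w))
variable (h0 : ∀ w : Fin 0 → ℕ, dens 0 w = 1)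
variable (hdh : DensHyp Q dens)

include hnn hsn h0 hdh in
lemma opens_le_liminf {G : Set (ℕ → ℕ)} (hG : IsOpen G) :
    muM dens G ≤ atTop.liminf (fun N : ℕ => emp Q (N + 1) G) := by
  obtain ⟨S, hsub, hunion, hdisj⟩ := open_decomp hG
  have hmeas : ∀ p : Wd, MeasurableSet (cylW p) := fun p => measurableSet_cylSet p.1 p.2
  have hGuni : G = ⋃ p : S, cylW p := by rw [hunion, Set.iUnion_coe_set]
  have hpair : Pairwise (Function.onFun Disjoint (fun p : S => cylW p)) := by
    intro p q hpq
    exact hdisj p.2 q.2 (fun h => hpq (Subtype.ext h))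
  have hsum : muM dens G = ∑' p : S, muM dens (cylW p) := by
    rw [hGuni]
    exact measure_iUnion hpair (fun p => hmeas p)
  rw [hsum, ENNReal.tsum_eq_iSup_sum]
  apply iSup_le
  intro F
  -- F : Finset S
  have hlim : Tendsto (fun N : ℕ => ∑ p ∈ F, emp Q (N+1) (cylW p)) atTop
      (𝓝 (∑ p ∈ F, ENNReal.ofReal (dens (p : Wd).1 (p : Wd).2))) := by
    apply tendsto_finset_sum
    intro p _
    exact (tendsto_emp_cyl hdh (p : Wd).1 (p : Wd).2).comp (tendsto_add_atTop_nat 1)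
  have hbound : ∀ N : ℕ, ∑ p ∈ F, emp Q (N+1) (cylW p) ≤ emp Q (N+1) G := by
    intro N
    have hdisjF : (↑F : Set S).PairwiseDisjoint (fun p : S => cylW p) :=
      fun p _ q _ hpq => hpair hpq
    rw [← measure_biUnion_finset hdisjF (fun p _ => hmeas p)]
    apply measure_mono
    intro z hz
    rcases mem_iUnion₂.mp hz with ⟨p, _, hzp⟩
    exact hsub p p.2 hzp
  have h1 : ∑ p ∈ F, muM dens (cylW p) = ∑ p ∈ F, ENNReal.ofReal (dens (p : Wd).1 (p : Wd).2) :=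
    Finset.sum_congr rfl (fun p _ => muM_cyl hnn hsn h0 (p : Wd).1 (p : Wd).2)
  rw [h1, ← hlim.liminf_eq]
  exact liminf_le_liminf (Eventually.of_forall hbound)

/-- the empirical probability measures -/
noncomputable def empP (Q : ℕ → ℕ) (N : ℕ) : ProbabilityMeasure (ℕ → ℕ) :=
  ⟨emp Q (N + 1), emp_prob Q N⟩

noncomputable def muP (dens : ∀ k : ℕ, (Fin k → ℕ) → ℝ) : ProbabilityMeasure (ℕ → ℕ) :=
  ⟨muM dens, muM_prob dens⟩

include hnn hsn h0 hdh in
lemma tendsto_empP : Tendsto (empP Q) atTop (𝓝 (muP dens)) := by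
  apply tendsto_of_forall_isOpen_le_liminf
  intro G hG
  have key := opens_le_liminf hnn hsn h0 hdh (Q := Q) hG
  have aux : ENNReal.ofNNReal (liminf (fun i => empP Q i G) atTop) =
      liminf (ENNReal.ofNNReal ∘ fun i => empP Q i G) atTop := by
    refine Monotone.map_liminf_of_continuousAt (F := atTop) ENNReal.coe_mono (empP Q · G) ?_ ?_ ?_
    · exact ENNReal.continuous_coe.continuousAt
    · exact IsBoundedUnder.isCoboundedUnder_ge ⟨1, by simp⟩
    · exact ⟨0, by simp⟩
  rw [← ENNReal.coe_le_coe, aux]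
  simp only [Function.comp_def, Function.comp_apply,
    ProbabilityMeasure.ennreal_coeFn_eq_coeFn_toMeasure]
  exact key

end Weak

/-! ## Part 6 -/

section Gen

lemma mem_cylSet_cons_iff (s : ℕ → ℕ) (k : ℕ) (w : Fin k → ℕ) (a : ℕ) :
    s ∈ cylSet (k+1) (Fin.cons a w) ↔ s 0 = a ∧ ∀ i : Fin k, s ((i : ℕ) + 1) = w i := by
  constructor
  · intro h
    refine ⟨by simpa using h 0, fun i => ?_⟩
    have := h i.succ
    rwa [Fin.cons_succ, Fin.val_succ] at this
  · rintro ⟨h0, h1⟩ i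
    induction i using Fin.cases with
    | zero => simpa using h0
    | succ j =>
      rw [Fin.cons_succ, Fin.val_succ]
      exact h1 j

lemma Tsh_preimage_cyl (k : ℕ) (w : Fin k → ℕ) :
    Tsh ⁻¹' (cylSet k w) = ⋃ a : ℕ, cylSet (k+1) (Fin.cons a w) := by
  ext s
  simp only [mem_preimage, mem_iUnion]
  constructor
  · intro h
    exact ⟨s 0, (mem_cylSet_cons_iff s k w (s 0)).mpr ⟨rfl, fun i => h i⟩⟩
  · rintro ⟨a, ha⟩
    exact fun i => ((mem_cylSet_cons_iff s k w a).mp ha).2 i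

lemma eval_fiber (n a : ℕ) :
    (fun s : ℕ → ℕ => s n) ⁻¹' {a} = ⋃ v : Fin n → ℕ, cylSet (n+1) (Fin.snoc v a) := by
  ext s
  simp only [mem_preimage, mem_singleton_iff, mem_iUnion]
  constructor
  · intro h
    refine ⟨fun i : Fin n => s (i : ℕ), fun i => ?_⟩
    induction i using Fin.lastCases with
    | last => rw [Fin.snoc_last]; exact h
    | cast j => rw [Fin.snoc_castSucc]; rfl
  · rintro ⟨v, hv⟩
    have := hv (Fin.last n)
    rw [Fin.snoc_last] at this
    exact this

lemma pi_eq_gen : (inferInstance : MeasurableSpace (ℕ → ℕ)) =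
    MeasurableSpace.generateFrom {s : Set (ℕ → ℕ) | ∃ p : Wd, s = cylW p} := by
  set gen := MeasurableSpace.generateFrom {s : Set (ℕ → ℕ) | ∃ p : Wd, s = cylW p} with hgen
  apply le_antisymm
  · have hev : ∀ n : ℕ, @Measurable _ _ gen _ (fun s : ℕ → ℕ => s n) := by
      intro n
      apply @measurable_to_countable' ℕ (ℕ → ℕ) _ _ gen _
      intro a
      rw [eval_fiber n a]
      exact @MeasurableSet.iUnion _ _ gen _ _ (fun v =>
        MeasurableSpace.measurableSet_generateFrom ⟨⟨n+1, Fin.snoc v a⟩, rfl⟩)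
    have h1 : @Measurable (ℕ → ℕ) (ℕ → ℕ) gen MeasurableSpace.pi id :=
      @measurable_pi_iff _ _ _ gen _ _ |>.mpr hev
    have h2 := @measurable_iff_comap_le _ _ gen MeasurableSpace.pi _ |>.mp h1
    rw [MeasurableSpace.comap_id] at h2
    show (MeasurableSpace.pi : MeasurableSpace (ℕ → ℕ)) ≤ gen
    exact h2
  · apply MeasurableSpace.generateFrom_le
    rintro s ⟨p, rfl⟩
    exact measurableSet_cylSet p.1 p.2

lemma inter_cyl_of_le {k j : ℕ} (hkj : k ≤ j) (w : Fin k → ℕ) (v : Fin j → ℕ)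
    (hne : (cylSet k w ∩ cylSet j v).Nonempty) :
    cylSet k w ∩ cylSet j v = cylSet j v := by
  obtain ⟨z, hzw, hzv⟩ := hne
  apply inter_eq_self_of_subset_right
  intro s hs i
  have hwv : w i = v ⟨(i : ℕ), lt_of_lt_of_le i.2 hkj⟩ := by
    rw [← hzw i, hzv ⟨(i : ℕ), lt_of_lt_of_le i.2 hkj⟩]
  rw [hwv]
  exact hs ⟨(i : ℕ), lt_of_lt_of_le i.2 hkj⟩

lemma isPiSystem_cyl : IsPiSystem {s : Set (ℕ → ℕ) | ∃ p : Wd, s = cylW p} := by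
  rintro s ⟨⟨k, w⟩, rfl⟩ t ⟨⟨j, v⟩, rfl⟩ hne
  rcases le_total k j with h | h
  · rw [show cylW ⟨k, w⟩ ∩ cylW ⟨j, v⟩ = cylSet j v from inter_cyl_of_le h w v hne]
    exact ⟨⟨j, v⟩, rfl⟩
  · rw [inter_comm] at hne ⊢
    rw [show cylW ⟨j, v⟩ ∩ cylW ⟨k, w⟩ = cylSet k w from inter_cyl_of_le h v w hne]
    exact ⟨⟨k, w⟩, rfl⟩

end Gen

section Main
variable {Q : ℕ → ℕ} {dens : ∀ k : ℕ, (Fin k → ℕ) → ℝ}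
variable (hnn : ∀ (k : ℕ) (w : Fin k → ℕ), 0 ≤ dens k w)
variable (hsn : ∀ (k : ℕ) (w : Fin k → ℕ), HasSum (fun a => dens (k+1) (Fin.snoc w a)) (dens k w))
variable (h0 : ∀ w : Fin 0 → ℕ, dens 0 w = 1)
variable (hdh : DensHyp Q dens)
variable (hone : ∀ k : ℕ, ∑' w : Fin k → ℕ, dens k w = 1)

include hnn hsn h0 hdh hone in
lemma muM_map_Tsh : (muM dens).map Tsh = muM dens := by
  haveI : IsProbabilityMeasure ((muM dens).map Tsh) :=
    Measure.isProbabilityMeasure_map measurable_Tsh.aemeasurable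
  apply ext_of_generate_finite _ pi_eq_gen isPiSystem_cyl
  · rintro s ⟨⟨k, w⟩, rfl⟩
    show ((muM dens).map Tsh) (cylSet k w) = muM dens (cylSet k w)
    rw [Measure.map_apply measurable_Tsh (measurableSet_cylSet k w), Tsh_preimage_cyl]
    have hdisj : Pairwise (Function.onFun Disjoint fun a : ℕ => cylSet (k+1) (Fin.cons a w)) := by
      intro a b hab
      rw [Function.onFun, Set.disjoint_left]
      intro s hsa hsb
      have h1 := ((mem_cylSet_cons_iff s k w a).mp hsa).1
      have h2 := ((mem_cylSet_cons_iff s k w b).mp hsb).1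
      exact hab (h1 ▸ h2 ▸ rfl)
    rw [measure_iUnion hdisj (fun a => measurableSet_cylSet _ _)]
    rw [tsum_congr (fun a => muM_cyl hnn hsn h0 (k+1) (Fin.cons a w))]
    rw [← ENNReal.ofReal_tsum_of_nonneg (fun a => hnn _ _) (summable_dens_cons hone k w)]
    rw [(hasSum_dens_cons hdh hone k w).tsum_eq]
    exact (muM_cyl hnn hsn h0 k w).symm
  · rw [Measure.map_apply measurable_Tsh MeasurableSet.univ]
    simp

include hdh in
lemma dens_eq_zero_of_never {k : ℕ} {w : Fin k → ℕ} (h : ∀ n : ℕ, ¬ occW Q k w n) :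
    dens k w = 0 := by
  have hz : Tendsto (fun N : ℕ => ((cntI Q k w N : ℝ)) / N) atTop (𝓝 0) := by
    have : ∀ N : ℕ, ((cntI Q k w N : ℝ)) / N = 0 := by
      intro N
      have : (Finset.Icc 1 N).filter (occW Q k w) = ∅ :=
        Finset.filter_false_of_mem (fun n _ => h n)
      rw [cntI, this]
      simp
    rw [funext this]
    exact tendsto_const_nhds
  exact tendsto_nhds_unique (hdh k w) hz

include hnn hsn h0 hdh in
lemma muM_closure : muM dens (closure {s : ℕ → ℕ | ∃ n : ℕ, s = Tsh^[n] Q}) = 1 := by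
  set C := closure {s : ℕ → ℕ | ∃ n : ℕ, s = Tsh^[n] Q} with hC
  have hCc : IsClosed C := isClosed_closure
  apply (prob_compl_eq_zero_iff hCc.measurableSet).mp
  obtain ⟨S, hsub, hunion, hdisj⟩ := open_decomp hCc.isOpen_compl
  have hmeas : ∀ p : Wd, MeasurableSet (cylW p) := fun p => measurableSet_cylSet p.1 p.2
  have hpair : Pairwise (Function.onFun Disjoint (fun p : S => cylW p)) := by
    intro p q hpq
    exact hdisj p.2 q.2 (fun h => hpq (Subtype.ext h))
  have hCuni : Cᶜ = ⋃ p : S, cylW p := by rw [hunion, Set.iUnion_coe_set]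
  rw [hCuni, measure_iUnion hpair (fun p => hmeas p)]
  have hzero' : ∀ p : S, muM dens (cylW (p : Wd)) = 0 := by
    rintro ⟨⟨k, w⟩, hpS⟩
    have hnever : ∀ n : ℕ, ¬ occW Q k w n := by
      intro n hocc
      have h1 : Tsh^[n] Q ∈ cylW ⟨k, w⟩ := (iterate_mem_cylSet_iff Q k w n).mpr hocc
      have h2 : Tsh^[n] Q ∈ C := subset_closure ⟨n, rfl⟩
      exact absurd h2 (hsub _ hpS h1)
    show muM dens (cylSet k w) = 0
    rw [muM_cyl hnn hsn h0 k w, dens_eq_zero_of_never hdh hnever]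
    simp
  rw [tsum_congr hzero', tsum_zero]

include hnn hsn h0 hdh in
lemma muM_pos (hzero : ∀ (k : ℕ) (w : Fin k → ℕ), dens k w = 0 →
      ∀ n : ℕ, ¬ ∀ i : Fin k, Q (n + (i : ℕ)) = w i)
    {U : Set (ℕ → ℕ)} (hU : IsOpen U)
    (hne : (U ∩ closure {s : ℕ → ℕ | ∃ n : ℕ, s = Tsh^[n] Q}).Nonempty) :
    0 < muM dens U := by
  obtain ⟨x, hxU, hxC⟩ := hne
  obtain ⟨k, hcyl⟩ := exists_cyl_subset hU hxU
  have hx_cyl : x ∈ cylSet k (fun i : Fin k => x (i : ℕ)) := fun _ => rfl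
  obtain ⟨y, hy_cyl, n, rfl⟩ := mem_closure_iff.mp hxC _ (isOpen_cylSet k _) hx_cyl
  have hocc : occW Q k (fun i : Fin k => x (i : ℕ)) n :=
    (iterate_mem_cylSet_iff Q k _ n).mp hy_cyl
  have hdne : dens k (fun i : Fin k => x (i : ℕ)) ≠ 0 := fun h => hzero k _ h n hocc
  have hpos : 0 < dens k (fun i : Fin k => x (i : ℕ)) :=
    lt_of_le_of_ne (dens_nonneg hdh k _) (Ne.symm hdne)
  calc (0 : ℝ≥0∞) < ENNReal.ofReal (dens k (fun i : Fin k => x (i : ℕ))) :=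
        ENNReal.ofReal_pos.mpr hpos
    _ = muM dens (cylSet k (fun i : Fin k => x (i : ℕ))) := (muM_cyl hnn hsn h0 k _).symm
    _ ≤ muM dens U := measure_mono hcyl

lemma integral_emp (Q : ℕ → ℕ) (g : BoundedContinuousFunction (ℕ → ℕ) ℝ) (N : ℕ) :
    ∫ s, g s ∂(emp Q (N+1)) =
      (1 / (((N : ℝ) + 1))) * ∑ n ∈ Finset.range (N+1), g (Tsh^[n] Q) := by
  rw [emp, integral_smul_measure,
    integral_finset_sum_measure (fun i _ => g.integrable _)]
  rw [Finset.sum_congr rfl (fun n _ => integral_dirac g (Tsh^[n] Q))]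
  rw [smul_eq_mul, ENNReal.toReal_inv]
  congr 1
  rw [one_div]
  congr 1
  rw [ENNReal.toReal_natCast]
  push_cast
  ring

include hnn hsn h0 hdh in
lemma generic_point (g : BoundedContinuousFunction (ℕ → ℕ) ℝ) :
    Tendsto (fun N : ℕ => (1 / (N : ℝ)) * ∑ n ∈ Finset.range N, g (Tsh^[n] Q))
      atTop (𝓝 (∫ s, g s ∂(muM dens))) := by
  have hconv := tendsto_empP hnn hsn h0 hdh
  have hint := ProbabilityMeasure.tendsto_iff_forall_integral_tendsto.mp hconv g
  rw [← tendsto_add_atTop_iff_nat 1]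
  apply hint.congr
  intro N
  show ∫ s, g s ∂(emp Q (N+1)) = _
  rw [integral_emp Q g N]
  push_cast
  ring_nf

end Main


/-- Characterization of dynamically generated basic sequences: if all word densities of
`Q` exist, words of density zero never occur, and densities of words of each length sum
to one, then the empirical measures along the shift orbit of `Q` converge weak* to a
shift-invariant Borel probability measure `μ` for which `Q` is a generic point, `μ` is
supported on the orbit closure, and `μ` is positive on open sets meeting the orbit
closure. -/
theorem stmt_4
    (Q : ℕ → ℕ) (hQ : ∀ n, 2 ≤ Q n)
    (T : (ℕ → ℕ) → (ℕ → ℕ)) (hT : ∀ s n, T s n = s (n + 1))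
    (dens : ∀ k : ℕ, (Fin k → ℕ) → ℝ)
    (hdens : ∀ (k : ℕ) (w : Fin k → ℕ),
      Tendsto (fun N : ℕ =>
        ({n : ℕ | 1 ≤ n ∧ n ≤ N ∧ ∀ i : Fin k, Q (n + (i : ℕ)) = w i}.ncard : ℝ) / N)
        atTop (𝓝 (dens k w)))
    (hzero : ∀ (k : ℕ) (w : Fin k → ℕ), dens k w = 0 →
      ∀ n : ℕ, ¬ ∀ i : Fin k, Q (n + (i : ℕ)) = w i)
    (hone : ∀ k : ℕ, ∑' w : Fin k → ℕ, dens k w = 1) :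
    ∃ μ : Measure (ℕ → ℕ), IsProbabilityMeasure μ ∧
      μ.map T = μ ∧
      (∀ g : BoundedContinuousFunction (ℕ → ℕ) ℝ,
        Tendsto (fun N : ℕ => (1 / (N : ℝ)) * ∑ n ∈ Finset.range N, g (T^[n] Q))
          atTop (𝓝 (∫ s, g s ∂μ))) ∧
      μ (closure {s | ∃ n : ℕ, s = T^[n] Q}) = 1 ∧
      (∀ U : Set (ℕ → ℕ), IsOpen U →
        (U ∩ closure {s | ∃ n : ℕ, s = T^[n] Q}).Nonempty → 0 < μ U) := by
  have hTeq : T = Tsh := funext fun s => funext fun n => hT s n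
  subst hTeq
  have hdh : DensHyp Q dens := densHyp_of hdens
  have hnn : ∀ (k : ℕ) (w : Fin k → ℕ), 0 ≤ dens k w := dens_nonneg hdh
  have h0 : ∀ w : Fin 0 → ℕ, dens 0 w = 1 := fun w => dens_zero hdh w
  have hsn : ∀ (k : ℕ) (w : Fin k → ℕ),
      HasSum (fun a => dens (k+1) (Fin.snoc w a)) (dens k w) :=
    fun k w => hasSum_dens_snoc hdh hone k w
  refine ⟨muM dens, muM_prob dens, muM_map_Tsh hnn hsn h0 hdh hone, ?_,
    muM_closure hnn hsn h0 hdh, ?_⟩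
  · intro g
    exact generic_point hnn hsn h0 hdh g
  · intro U hU hne
    exact muM_pos hnn hsn h0 hdh hzero hU hne
end

section
/- Let Q be a basic sequence generated by a continuous measure preserving system (X, 𝓑, μ, T) with continuous f : X → ℕ_{≥2} and generic point x₀ (so q_n = f(Tⁿx₀)). Then for every block of digits D = (d_1,...,d_ℓ) ∈ ℕ₀^ℓ, the limit P_D := lim_{n→∞} Q_n(D)/n exists and equals ∫_X f_D dμ, where f_D(x) = (∏_{i=1}^ℓ f(Tⁱx))^{−1} if f(Tⁱx) > d_i for all 1 ≤ i ≤ ℓ, and f_D(x) = 0 otherwise. -/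
open Filter MeasureTheory Topology

/-- For a basic sequence `Q` generated by a continuous measure preserving system
`(X, μ, T)` with continuous `f : X → ℕ≥2` and generic point `x₀` (so `q n = f (Tⁿ x₀)`),
and every block of digits `D`, the limit `P_D = lim Q_n(D)/n` exists and equals
`∫ f_D dμ`, where `f_D x = (∏ f(Tⁱx))⁻¹` if `f(Tⁱx) > d_i` for `1 ≤ i ≤ ℓ` and `0`
otherwise. -/
theorem stmt_5 {X : Type*} [MetricSpace X] [CompleteSpace X]
    [TopologicalSpace.SeparableSpace X] [MeasurableSpace X] [BorelSpace X]
    (μ : Measure X) [IsProbabilityMeasure μ]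
    (hμpos : ∀ U : Set X, IsOpen U → U.Nonempty → 0 < μ U)
    (T : X → X) (hTcont : Continuous T) (hTpres : MeasurePreserving T μ μ)
    (f : X → ℕ) (hfcont : Continuous f) (hf2 : ∀ x, 2 ≤ f x)
    (x₀ : X)
    (hgen : ∀ g : X → ℝ, Continuous g → Integrable g μ →
      Tendsto (fun N : ℕ => (1 / (N : ℝ)) * ∑ n ∈ Finset.range N, g (T^[n] x₀))
        atTop (𝓝 (∫ x, g x ∂μ)))
    (q : ℕ → ℕ) (hq : ∀ n, q n = f (T^[n] x₀))
    (ℓ : ℕ) (hℓ : 0 < ℓ) (D : Fin ℓ → ℕ) :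
    Tendsto (fun n : ℕ =>
        (∑ j ∈ Finset.Icc 1 n,
          (if ∀ i : Fin ℓ, D i < q (j + (i : ℕ)) then
            (∏ i : Fin ℓ, (q (j + (i : ℕ)) : ℝ))⁻¹ else 0)) / (n : ℝ))
      atTop
      (𝓝 (∫ x, (if ∀ i : Fin ℓ, D i < f (T^[(i : ℕ) + 1] x) then
            (∏ i : Fin ℓ, (f (T^[(i : ℕ) + 1] x) : ℝ))⁻¹ else 0) ∂μ)) := by
  classical
  set g : X → ℝ := fun x =>
    (if ∀ i : Fin ℓ, D i < f (T^[(i : ℕ) + 1] x) then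
      (∏ i : Fin ℓ, (f (T^[(i : ℕ) + 1] x) : ℝ))⁻¹ else 0) with hg
  -- g factors through a discrete space
  have hgcont : Continuous g := by
    have hh : Continuous (fun x => (fun i : Fin ℓ => f (T^[(i : ℕ) + 1] x)) : X → Fin ℓ → ℕ) := by
      apply continuous_pi
      intro i
      exact hfcont.comp (hTcont.iterate _)
    have : g = (fun v : Fin ℓ → ℕ =>
        (if ∀ i : Fin ℓ, D i < v i then (∏ i : Fin ℓ, (v i : ℝ))⁻¹ else 0)) ∘
        (fun x => fun i : Fin ℓ => f (T^[(i : ℕ) + 1] x)) := rfl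
    rw [this]
    exact (continuous_of_discreteTopology).comp hh
  have hbound : ∀ x, |g x| ≤ 1 := by
    intro x
    rw [hg]
    dsimp only
    split_ifs with h
    · rw [abs_of_nonneg (by positivity)]
      have h1 : (1 : ℝ) ≤ ∏ i : Fin ℓ, (f (T^[(i : ℕ) + 1] x) : ℝ) := by
        calc (1 : ℝ) = ∏ _i : Fin ℓ, (1 : ℝ) := by simp
        _ ≤ ∏ i : Fin ℓ, (f (T^[(i : ℕ) + 1] x) : ℝ) :=
          Finset.prod_le_prod (fun i _ => zero_le_one)
            (fun i _ => Nat.one_le_cast.mpr (le_trans one_le_two (hf2 _)))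
      exact inv_le_one_of_one_le₀ h1
    · simp
  have hgint : Integrable g μ := by
    refine (integrable_const (1 : ℝ)).mono' hgcont.aestronglyMeasurable ?_
    exact ae_of_all _ fun x => by simpa using hbound x
  have key := hgen g hgcont hgint
  have heq : ∀ n : ℕ,
      (∑ j ∈ Finset.Icc 1 n,
        (if ∀ i : Fin ℓ, D i < q (j + (i : ℕ)) then
          (∏ i : Fin ℓ, (q (j + (i : ℕ)) : ℝ))⁻¹ else 0)) / (n : ℝ)
      = (1 / (n : ℝ)) * ∑ k ∈ Finset.range n, g (T^[k] x₀) := by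
    intro n
    rw [one_div, div_eq_mul_inv, mul_comm]
    congr 1
    rw [← Finset.Ico_add_one_right_eq_Icc, Finset.sum_Ico_eq_sum_range]
    apply Finset.sum_congr rfl
    intro k _
    have hterm : ∀ i : Fin ℓ, q (1 + k + (i : ℕ)) = f (T^[(i : ℕ) + 1] (T^[k] x₀)) := by
      intro i
      have e : (i : ℕ) + 1 + k = 1 + k + (i : ℕ) := by omega
      rw [hq, ← Function.iterate_add_apply, e]
    rw [hg]
    simp only [hterm]
  simpa only [heq] using key
end

section
/- Let Q be a dynamically generated basic sequence. For every ℓ ∈ ℕ, the sum over all digit blocks D ∈ ℕ₀^ℓ of P_D equals 1, where P_D = lim_{n→∞} Q_n(D)/n. -/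
open Filter MeasureTheory Topology

private lemma aux_prod_ge {ι : Type*} (s : Finset ι) (a : ι → ℝ)
    (h0 : ∀ i ∈ s, 0 ≤ a i) (h1 : ∀ i ∈ s, a i ≤ 1) :
    1 - ∑ i ∈ s, (1 - a i) ≤ ∏ i ∈ s, a i := by
  classical
  induction s using Finset.induction_on with
  | empty => simp
  | @insert x s hx ih =>
    have h0' : ∀ i ∈ s, 0 ≤ a i := fun i hi => h0 i (Finset.mem_insert_of_mem hi)
    have h1' : ∀ i ∈ s, a i ≤ 1 := fun i hi => h1 i (Finset.mem_insert_of_mem hi)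
    have hih := ih h0' h1'
    have hp1 : ∏ i ∈ s, a i ≤ 1 := Finset.prod_le_one h0' h1'
    have hp0 : 0 ≤ ∏ i ∈ s, a i := Finset.prod_nonneg h0'
    have hax0 : 0 ≤ a x := h0 x (Finset.mem_insert_self x s)
    have hax1 : a x ≤ 1 := h1 x (Finset.mem_insert_self x s)
    rw [Finset.sum_insert hx, Finset.prod_insert hx]
    nlinarith

private lemma aux_shift (u : ℕ → ℝ) (I : ℝ)
    (hu : Tendsto (fun N : ℕ => (1 / (N : ℝ)) * ∑ k ∈ Finset.range N, u k)
      atTop (𝓝 I)) (m : ℕ) :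
    Tendsto (fun n : ℕ => (∑ j ∈ Finset.Icc 1 n, u (j + m)) / (n : ℝ))
      atTop (𝓝 I) := by
  set S : ℕ → ℝ := fun N => ∑ k ∈ Finset.range N, u k with hS
  have hsum : ∀ n : ℕ, ∑ j ∈ Finset.Icc 1 n, u (j + m) = S (n + (m + 1)) - S (m + 1) := by
    intro n
    have h1 : Finset.Icc 1 n = Finset.Ico 1 (n + 1) := rfl
    have h2 : S (n + (m + 1)) - S (m + 1)
        = ∑ k ∈ Finset.Ico (m + 1) (n + (m + 1)), u k :=
      (Finset.sum_Ico_eq_sub u (by omega)).symm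
    rw [h1, Finset.sum_Ico_eq_sum_range, h2, Finset.sum_Ico_eq_sum_range]
    refine Finset.sum_congr (by congr 1; omega) fun k _ => by congr 1; omega
  have hA : Tendsto (fun n : ℕ => (1 / ((n + (m + 1) : ℕ) : ℝ)) * S (n + (m + 1)))
      atTop (𝓝 I) := hu.comp (tendsto_add_atTop_nat (m + 1))
  have hB : Tendsto (fun n : ℕ => ((n + (m + 1) : ℕ) : ℝ) / (n : ℝ)) atTop (𝓝 1) := by
    have h0 : Tendsto (fun n : ℕ => 1 + ((m : ℝ) + 1) * (1 / (n : ℝ))) atTop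
        (𝓝 (1 + ((m : ℝ) + 1) * 0)) :=
      tendsto_const_nhds.add (tendsto_const_nhds.mul tendsto_one_div_atTop_nhds_zero_nat)
    rw [mul_zero, add_zero] at h0
    apply h0.congr'
    filter_upwards [eventually_ge_atTop 1] with n hn
    have hn0 : (n : ℝ) ≠ 0 := Nat.cast_ne_zero.mpr (by omega)
    push_cast
    field_simp
  have hC : Tendsto (fun n : ℕ => S (m + 1) * (1 / (n : ℝ))) atTop (𝓝 0) := by
    simpa using tendsto_const_nhds.mul
      (tendsto_one_div_atTop_nhds_zero_nat : Tendsto (fun n : ℕ => 1 / (n : ℝ)) atTop (𝓝 0))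
  have hD := (hB.mul hA).sub hC
  rw [one_mul, sub_zero] at hD
  apply hD.congr'
  filter_upwards [eventually_ge_atTop 1] with n hn
  have hn0 : (n : ℝ) ≠ 0 := Nat.cast_ne_zero.mpr (by omega)
  have hm0 : ((n + (m + 1) : ℕ) : ℝ) ≠ 0 := Nat.cast_ne_zero.mpr (by omega)
  rw [hsum n]
  field_simp

/-- For a dynamically generated basic sequence `Q` and every block length `ℓ`, the sum
over all digit blocks `D ∈ ℕ₀^ℓ` of `P_D = lim Q_n(D)/n` equals `1`. -/
theorem stmt_6 {X : Type*} [MetricSpace X] [CompleteSpace X]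
    [TopologicalSpace.SeparableSpace X] [MeasurableSpace X] [BorelSpace X]
    (μ : Measure X) [IsProbabilityMeasure μ]
    (hμpos : ∀ U : Set X, IsOpen U → U.Nonempty → 0 < μ U)
    (T : X → X) (hTcont : Continuous T) (hTpres : MeasurePreserving T μ μ)
    (f : X → ℕ) (hfcont : Continuous f) (hf2 : ∀ x, 2 ≤ f x)
    (x₀ : X)
    (hgen : ∀ g : X → ℝ, Continuous g → Integrable g μ →
      Tendsto (fun N : ℕ => (1 / (N : ℝ)) * ∑ n ∈ Finset.range N, g (T^[n] x₀))
        atTop (𝓝 (∫ x, g x ∂μ)))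
    (q : ℕ → ℕ) (hq : ∀ n, q n = f (T^[n] x₀))
    (ℓ : ℕ) (hℓ : 0 < ℓ)
    (P : (Fin ℓ → ℕ) → ℝ)
    (hP : ∀ D : Fin ℓ → ℕ,
      Tendsto (fun n : ℕ =>
        (∑ j ∈ Finset.Icc 1 n,
          (if ∀ i : Fin ℓ, D i < q (j + (i : ℕ)) then
            (∏ i : Fin ℓ, (q (j + (i : ℕ)) : ℝ))⁻¹ else 0)) / (n : ℝ))
        atTop (𝓝 (P D))) :
    ∑' D : Fin ℓ → ℕ, P D = 1 := by
  classical
  -- basic facts about q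
  have hq2 : ∀ n, 2 ≤ q n := fun n => (hq n) ▸ hf2 _
  have hqpos : ∀ n, (0 : ℝ) < (q n : ℝ) := fun n => by
    exact_mod_cast lt_of_lt_of_le (by norm_num) (hq2 n)
  -- the per-(j,D) term
  set term : ℕ → (Fin ℓ → ℕ) → ℝ := fun j D =>
    if ∀ i : Fin ℓ, D i < q (j + (i : ℕ)) then
      (∏ i : Fin ℓ, (q (j + (i : ℕ)) : ℝ))⁻¹ else 0 with hterm
  have hprodpos : ∀ j : ℕ, (0 : ℝ) < ∏ i : Fin ℓ, (q (j + (i : ℕ)) : ℝ) :=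
    fun j => Finset.prod_pos fun i _ => hqpos _
  have htermnn : ∀ j D, 0 ≤ term j D := by
    intro j D
    simp only [hterm]
    split
    · exact inv_nonneg.mpr (hprodpos j).le
    · exact le_rfl
  -- P is nonnegative
  have hPnn : ∀ D, 0 ≤ P D := by
    intro D
    refine ge_of_tendsto' (hP D) fun n => ?_
    exact div_nonneg (Finset.sum_nonneg fun j _ => htermnn j D) (Nat.cast_nonneg n)
  -- the full-box sum equals 1
  have hfull : ∀ j : ℕ,
      ∑ D ∈ Fintype.piFinset (fun i : Fin ℓ => Finset.range (q (j + (i : ℕ)))),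
        term j D = 1 := by
    intro j
    have h1 : ∀ D ∈ Fintype.piFinset (fun i : Fin ℓ => Finset.range (q (j + (i : ℕ)))),
        term j D = (∏ i : Fin ℓ, (q (j + (i : ℕ)) : ℝ))⁻¹ := by
      intro D hD
      simp only [hterm]
      rw [if_pos]
      intro i
      simpa using (Fintype.mem_piFinset.mp hD) i
    rw [Finset.sum_congr rfl h1, Finset.sum_const, Fintype.card_piFinset]
    simp only [Finset.card_range, nsmul_eq_mul]
    push_cast
    exact mul_inv_cancel₀ (hprodpos j).ne'
  -- upper bound for sums over arbitrary finite families of blocks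
  have hA : ∀ (j : ℕ) (F : Finset (Fin ℓ → ℕ)), ∑ D ∈ F, term j D ≤ 1 := by
    intro j F
    set B := Fintype.piFinset (fun i : Fin ℓ => Finset.range (q (j + (i : ℕ)))) with hB
    calc ∑ D ∈ F, term j D ≤ ∑ D ∈ F ∪ B, term j D :=
          Finset.sum_le_sum_of_subset_of_nonneg Finset.subset_union_left
            (fun D _ _ => htermnn j D)
      _ = ∑ D ∈ B, term j D := by
          refine (Finset.sum_subset Finset.subset_union_right ?_).symm
          intro D _ hDB
          simp only [hterm]
          rw [if_neg]
          intro hall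
          exact hDB (Fintype.mem_piFinset.mpr fun i => Finset.mem_range.mpr (hall i))
      _ = 1 := hfull j
  -- lower bound for the M-box
  have hboxM : ∀ (M : ℕ) (j : ℕ),
      (1 : ℝ) - ∑ i : Fin ℓ, (if M < q (j + (i : ℕ)) then (1 : ℝ) else 0) ≤
        ∑ D ∈ Fintype.piFinset (fun _ : Fin ℓ => Finset.range M), term j D := by
    intro M j
    have hEq : ∑ D ∈ Fintype.piFinset (fun _ : Fin ℓ => Finset.range M), term j D
        = ∏ i : Fin ℓ, ((min M (q (j + (i : ℕ))) : ℝ) / (q (j + (i : ℕ)) : ℝ)) := by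
      have hsub : Fintype.piFinset (fun i : Fin ℓ => Finset.range (min M (q (j + (i : ℕ)))))
          ⊆ Fintype.piFinset (fun _ : Fin ℓ => Finset.range M) := by
        intro D hD
        refine Fintype.mem_piFinset.mpr fun i => Finset.mem_range.mpr ?_
        have := Finset.mem_range.mp (Fintype.mem_piFinset.mp hD i)
        omega
      rw [← Finset.sum_subset hsub ?hzero]
      · have h1 : ∀ D ∈ Fintype.piFinset
            (fun i : Fin ℓ => Finset.range (min M (q (j + (i : ℕ))))),
            term j D = (∏ i : Fin ℓ, (q (j + (i : ℕ)) : ℝ))⁻¹ := by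
          intro D hD
          simp only [hterm]
          rw [if_pos]
          intro i
          have := Finset.mem_range.mp (Fintype.mem_piFinset.mp hD i)
          omega
        rw [Finset.sum_congr rfl h1, Finset.sum_const, Fintype.card_piFinset]
        simp only [Finset.card_range, nsmul_eq_mul]
        push_cast
        rw [← Finset.prod_inv_distrib, ← Finset.prod_mul_distrib]
        exact Finset.prod_congr rfl fun i _ => (div_eq_mul_inv _ _).symm
      case hzero =>
        intro D hD hDn
        simp only [hterm]
        rw [if_neg]
        intro hall
        refine hDn (Fintype.mem_piFinset.mpr fun i => Finset.mem_range.mpr ?_)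
        have h2 := Finset.mem_range.mp (Fintype.mem_piFinset.mp hD i)
        have h3 := hall i
        omega
    rw [hEq]
    have key := aux_prod_ge Finset.univ
        (fun i : Fin ℓ => (min M (q (j + (i : ℕ))) : ℝ) / (q (j + (i : ℕ)) : ℝ))
        (fun i _ => div_nonneg (le_min (Nat.cast_nonneg _) (Nat.cast_nonneg _)) (hqpos _).le)
        (fun i _ => (div_le_one (hqpos _)).mpr (min_le_right _ _))
    refine le_trans (sub_le_sub_left (Finset.sum_le_sum fun i _ => ?_) 1) key
    by_cases hMq : M < q (j + (i : ℕ))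
    · rw [if_pos hMq]
      have : (0:ℝ) ≤ min (M : ℝ) (q (j + (i : ℕ)) : ℝ) / (q (j + (i : ℕ)) : ℝ) :=
        div_nonneg (le_min (Nat.cast_nonneg _) (Nat.cast_nonneg _)) (hqpos _).le
      linarith
    · rw [if_neg hMq]
      have hmin : min (M : ℝ) (q (j + (i : ℕ)) : ℝ) = (q (j + (i : ℕ)) : ℝ) :=
        min_eq_right (by exact_mod_cast (by omega : q (j + (i : ℕ)) ≤ M))
      rw [hmin, div_self (hqpos _).ne']
      norm_num
  -- the truncation functions
  set g : ℕ → X → ℝ := fun M x => if M < f x then (1 : ℝ) else 0 with hg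
  have hgcont : ∀ M, Continuous (g M) := by
    intro M
    exact (continuous_of_discreteTopology
      (f := fun k : ℕ => if M < k then (1 : ℝ) else 0)).comp hfcont
  have hgmeas : ∀ M, AEStronglyMeasurable (g M) μ := fun M =>
    (hgcont M).aestronglyMeasurable
  have hgbd : ∀ M, ∀ᵐ x ∂μ, ‖g M x‖ ≤ 1 := by
    intro M
    refine Eventually.of_forall fun x => ?_
    simp only [hg]
    split <;> simp
  have hgint : ∀ M, Integrable (g M) μ := fun M =>
    ⟨hgmeas M, HasFiniteIntegral.of_bounded (hgbd M)⟩
  have hindic : ∀ (M j : ℕ) (i : Fin ℓ),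
      (if M < q (j + (i : ℕ)) then (1 : ℝ) else 0) = g M (T^[j + (i : ℕ)] x₀) := by
    intro M j i
    simp only [hg, hq]
  -- summability and upper bound for the tsum
  have hFle : ∀ F : Finset (Fin ℓ → ℕ), ∑ D ∈ F, P D ≤ 1 := by
    intro F
    have ht : Tendsto (fun n : ℕ => ∑ D ∈ F, (∑ j ∈ Finset.Icc 1 n, term j D) / (n : ℝ))
        atTop (𝓝 (∑ D ∈ F, P D)) := tendsto_finset_sum F fun D _ => hP D
    refine le_of_tendsto ht ?_
    filter_upwards [eventually_ge_atTop 1] with n hn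
    have hn0 : (0 : ℝ) < (n : ℝ) := by exact_mod_cast (by omega : 0 < n)
    rw [← Finset.sum_div, div_le_one hn0]
    calc ∑ D ∈ F, ∑ j ∈ Finset.Icc 1 n, term j D
        = ∑ j ∈ Finset.Icc 1 n, ∑ D ∈ F, term j D := Finset.sum_comm
      _ ≤ ∑ j ∈ Finset.Icc 1 n, (1 : ℝ) := Finset.sum_le_sum fun j _ => hA j F
      _ = (n : ℝ) := by simp [Nat.card_Icc]
  have hsumm : Summable P := summable_of_sum_le hPnn hFle
  have htsum_le : ∑' D : Fin ℓ → ℕ, P D ≤ 1 := Summable.tsum_le_of_sum_le hsumm hFle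
  -- lower bound for the tsum
  have hlow : ∀ M : ℕ, 1 - (ℓ : ℝ) * ∫ x, g M x ∂μ ≤ ∑' D : Fin ℓ → ℕ, P D := by
    intro M
    set F := Fintype.piFinset (fun _ : Fin ℓ => Finset.range M) with hF
    have h1 : ∑ D ∈ F, P D ≤ ∑' D : Fin ℓ → ℕ, P D :=
      Summable.sum_le_tsum F (fun D _ => hPnn D) hsumm
    refine le_trans ?_ h1
    have ht : Tendsto (fun n : ℕ => ∑ D ∈ F, (∑ j ∈ Finset.Icc 1 n, term j D) / (n : ℝ))
        atTop (𝓝 (∑ D ∈ F, P D)) := tendsto_finset_sum F fun D _ => hP D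
    have hRHS : Tendsto (fun n : ℕ =>
        1 - ∑ i : Fin ℓ, (∑ j ∈ Finset.Icc 1 n, g M (T^[j + (i : ℕ)] x₀)) / (n : ℝ))
        atTop (𝓝 (1 - ∑ _i : Fin ℓ, ∫ x, g M x ∂μ)) := by
      refine tendsto_const_nhds.sub (tendsto_finset_sum _ fun i _ => ?_)
      exact aux_shift (fun k => g M (T^[k] x₀)) _ (hgen (g M) (hgcont M) (hgint M)) (i : ℕ)
    have key := le_of_tendsto_of_tendsto hRHS ht ?_
    · calc 1 - (ℓ : ℝ) * ∫ x, g M x ∂μ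
          = 1 - ∑ _i : Fin ℓ, ∫ x, g M x ∂μ := by
            rw [Finset.sum_const, Finset.card_univ, Fintype.card_fin, nsmul_eq_mul]
        _ ≤ ∑ D ∈ F, P D := key
    · filter_upwards [eventually_ge_atTop 1] with n hn
      have hn0 : (0 : ℝ) < (n : ℝ) := by exact_mod_cast (by omega : 0 < n)
      have perj : ∀ j ∈ Finset.Icc 1 n,
          (1 : ℝ) - ∑ i : Fin ℓ, g M (T^[j + (i : ℕ)] x₀) ≤ ∑ D ∈ F, term j D := by
        intro j _
        have := hboxM M j
        rwa [Finset.sum_congr rfl fun i _ => hindic M j i] at this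
      have hsum_ge : (n : ℝ) - ∑ i : Fin ℓ, ∑ j ∈ Finset.Icc 1 n, g M (T^[j + (i : ℕ)] x₀)
          ≤ ∑ D ∈ F, ∑ j ∈ Finset.Icc 1 n, term j D := by
        rw [Finset.sum_comm (s := F)]
        calc (n : ℝ) - ∑ i : Fin ℓ, ∑ j ∈ Finset.Icc 1 n, g M (T^[j + (i : ℕ)] x₀)
            = ∑ j ∈ Finset.Icc 1 n,
                ((1 : ℝ) - ∑ i : Fin ℓ, g M (T^[j + (i : ℕ)] x₀)) := by
              rw [Finset.sum_sub_distrib, Finset.sum_const, Nat.card_Icc,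
                Finset.sum_comm]
              simp
          _ ≤ ∑ j ∈ Finset.Icc 1 n, ∑ D ∈ F, term j D := Finset.sum_le_sum perj
      have h2 : (1 : ℝ) - ∑ i : Fin ℓ,
          (∑ j ∈ Finset.Icc 1 n, g M (T^[j + (i : ℕ)] x₀)) / (n : ℝ)
          = ((n : ℝ) - ∑ i : Fin ℓ, ∑ j ∈ Finset.Icc 1 n, g M (T^[j + (i : ℕ)] x₀)) / (n : ℝ) := by
        rw [sub_div, div_self hn0.ne']
        congr 1
        exact (Finset.sum_div _ _ _).symm
      calc (1 : ℝ) - ∑ i : Fin ℓ,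
            (∑ j ∈ Finset.Icc 1 n, g M (T^[j + (i : ℕ)] x₀)) / (n : ℝ)
          = ((n : ℝ) - ∑ i : Fin ℓ, ∑ j ∈ Finset.Icc 1 n, g M (T^[j + (i : ℕ)] x₀)) / (n : ℝ) := h2
        _ ≤ (∑ D ∈ F, ∑ j ∈ Finset.Icc 1 n, term j D) / (n : ℝ) := by gcongr
        _ = ∑ D ∈ F, (∑ j ∈ Finset.Icc 1 n, term j D) / (n : ℝ) := Finset.sum_div _ _ _
  -- the integrals tend to 0
  have hint0 : Tendsto (fun M : ℕ => ∫ x, g M x ∂μ) atTop (𝓝 0) := by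
    have := MeasureTheory.tendsto_integral_of_dominated_convergence
      (F := g) (f := fun _ : X => (0 : ℝ)) (bound := fun _ => (1 : ℝ))
      hgmeas (integrable_const 1) hgbd ?_
    · simpa using this
    · refine Eventually.of_forall fun x => ?_
      have h0 : Tendsto (fun _ : ℕ => (0 : ℝ)) atTop (𝓝 ((fun _ : X => (0 : ℝ)) x)) :=
        tendsto_const_nhds
      refine Tendsto.congr' ?_ h0
      filter_upwards [eventually_ge_atTop (f x)] with M hM
      simp only [hg]
      rw [if_neg (by omega)]
  have hfin : Tendsto (fun M : ℕ => 1 - (ℓ : ℝ) * ∫ x, g M x ∂μ) atTop (𝓝 1) := by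
    have hmul : Tendsto (fun M : ℕ => (ℓ : ℝ) * ∫ x, g M x ∂μ) atTop (𝓝 ((ℓ : ℝ) * 0)) :=
      Tendsto.const_mul _ hint0
    have hsub : Tendsto (fun M : ℕ => 1 - (ℓ : ℝ) * ∫ x, g M x ∂μ) atTop
        (𝓝 (1 - (ℓ : ℝ) * 0)) := tendsto_const_nhds.sub hmul
    simpa using hsub
  have h1le : (1 : ℝ) ≤ ∑' D : Fin ℓ → ℕ, P D :=
    le_of_tendsto hfin (Eventually.of_forall hlow)
  linarith
end

section
/- Let Q be a dynamically generated basic sequence. For every ℓ ∈ ℕ and every digit block D ∈ ℕ₀^ℓ, we have Σ_{B ∈ ℕ_{≥2}^ℓ} P_{D,B} = P_D, where P_{D,B} = lim_{n→∞} Q_n(D,B)/n and P_D = lim_{n→∞} Q_n(D)/n. -/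
open Filter MeasureTheory Topology

/-- For a dynamically generated basic sequence `Q`, every digit block `D` of length `ℓ`
satisfies `∑_{B ∈ ℕ≥2^ℓ} P_{D,B} = P_D`, where `P_{D,B} = lim Q_n(D,B)/n` and
`P_D = lim Q_n(D)/n`. -/
theorem stmt_7 {X : Type*} [MetricSpace X] [CompleteSpace X]
    [TopologicalSpace.SeparableSpace X] [MeasurableSpace X] [BorelSpace X]
    (μ : Measure X) [IsProbabilityMeasure μ]
    (hμpos : ∀ U : Set X, IsOpen U → U.Nonempty → 0 < μ U)
    (T : X → X) (hTcont : Continuous T) (hTpres : MeasurePreserving T μ μ)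
    (f : X → ℕ) (hfcont : Continuous f) (hf2 : ∀ x, 2 ≤ f x)
    (x₀ : X)
    (hgen : ∀ g : X → ℝ, Continuous g → Integrable g μ →
      Tendsto (fun N : ℕ => (1 / (N : ℝ)) * ∑ n ∈ Finset.range N, g (T^[n] x₀))
        atTop (𝓝 (∫ x, g x ∂μ)))
    (q : ℕ → ℕ) (hq : ∀ n, q n = f (T^[n] x₀))
    (ℓ : ℕ) (hℓ : 0 < ℓ) (D : Fin ℓ → ℕ)
    (PD : ℝ)
    (hPD : Tendsto (fun n : ℕ =>
        (∑ j ∈ Finset.Icc 1 n,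
          (if ∀ i : Fin ℓ, D i < q (j + (i : ℕ)) then
            (∏ i : Fin ℓ, (q (j + (i : ℕ)) : ℝ))⁻¹ else 0)) / (n : ℝ))
      atTop (𝓝 PD))
    (PDB : (Fin ℓ → ℕ) → ℝ)
    (hPDB : ∀ B : Fin ℓ → ℕ,
      Tendsto (fun n : ℕ =>
        (∑ j ∈ Finset.Icc 1 n,
          (if (∀ i : Fin ℓ, q (j + (i : ℕ)) = B i) ∧ (∀ i : Fin ℓ, D i < B i) then
            (∏ i : Fin ℓ, (B i : ℝ))⁻¹ else 0)) / (n : ℝ))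
        atTop (𝓝 (PDB B))) :
    ∑' B : Fin ℓ → ℕ, PDB B = PD := by
  classical
  have hq2 : ∀ n, 2 ≤ q n := fun n => (hq n) ▸ hf2 _
  -- nonnegativity of the approximants
  have hgnn : ∀ (B : Fin ℓ → ℕ) (n : ℕ), 0 ≤
      (∑ j ∈ Finset.Icc 1 n,
        (if (∀ i : Fin ℓ, q (j + (i : ℕ)) = B i) ∧ (∀ i : Fin ℓ, D i < B i) then
          (∏ i : Fin ℓ, (B i : ℝ))⁻¹ else 0)) / (n : ℝ) := by
    intro B n
    apply div_nonneg _ (Nat.cast_nonneg n)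
    apply Finset.sum_nonneg
    intro j _
    split
    · positivity
    · exact le_rfl
  have hPDBnn : ∀ B, 0 ≤ PDB B := fun B =>
    ge_of_tendsto (hPDB B) (Eventually.of_forall fun n => hgnn B n)
  -- the per-`j` collapse of the sum over a box of blocks
  have hsum_eq : ∀ (M : ℕ) (j : ℕ),
      (∑ B ∈ Fintype.piFinset (fun _ : Fin ℓ => Finset.range M),
        (if (∀ i : Fin ℓ, q (j + (i : ℕ)) = B i) ∧ (∀ i : Fin ℓ, D i < B i) then
          (∏ i : Fin ℓ, (B i : ℝ))⁻¹ else 0))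
      = if (∀ i : Fin ℓ, q (j + (i : ℕ)) < M) ∧ (∀ i : Fin ℓ, D i < q (j + (i : ℕ))) then
          (∏ i : Fin ℓ, (q (j + (i : ℕ)) : ℝ))⁻¹ else 0 := by
    intro M j
    have h1 : ∀ B : Fin ℓ → ℕ,
        (if (∀ i : Fin ℓ, q (j + (i : ℕ)) = B i) ∧ (∀ i : Fin ℓ, D i < B i) then
          (∏ i : Fin ℓ, (B i : ℝ))⁻¹ else 0)
        = if B = (fun i : Fin ℓ => q (j + (i : ℕ))) then
            (if (∀ i : Fin ℓ, D i < q (j + (i : ℕ))) then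
              (∏ i : Fin ℓ, (q (j + (i : ℕ)) : ℝ))⁻¹ else 0) else 0 := by
      intro B
      by_cases hB : B = fun i : Fin ℓ => q (j + (i : ℕ))
      · subst hB; simp
      · rw [if_neg hB, if_neg]
        rintro ⟨h1, -⟩
        exact hB (funext fun i => (h1 i).symm)
    rw [Finset.sum_congr rfl fun B _ => h1 B, Finset.sum_ite_eq' _ _ _]
    simp only [Fintype.mem_piFinset, Finset.mem_range, ← ite_and]
  -- tail bound for a `j` whose block escapes the box
  have htail : ∀ (M : ℕ), 1 ≤ M → ∀ j : ℕ, ¬(∀ i : Fin ℓ, q (j + (i : ℕ)) < M) →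
      (∏ i : Fin ℓ, (q (j + (i : ℕ)) : ℝ))⁻¹ ≤ 1 / (2 ^ (ℓ - 1) * (M : ℝ)) := by
    intro M hM j hj
    push_neg at hj
    obtain ⟨i₀, hi₀⟩ := hj
    have hprod : (2 : ℝ) ^ (ℓ - 1) * (M : ℝ) ≤ ∏ i : Fin ℓ, (q (j + (i : ℕ)) : ℝ) := by
      rw [← Finset.mul_prod_erase Finset.univ _ (Finset.mem_univ i₀)]
      have h2 : (2 : ℝ) ^ (ℓ - 1) ≤ ∏ i ∈ Finset.univ.erase i₀, (q (j + (i : ℕ)) : ℝ) := by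
        calc (2 : ℝ) ^ (ℓ - 1) = ∏ _i ∈ Finset.univ.erase i₀, (2 : ℝ) := by
              rw [Finset.prod_const, Finset.card_erase_of_mem (Finset.mem_univ i₀),
                Finset.card_univ, Fintype.card_fin]
          _ ≤ _ := Finset.prod_le_prod (fun _ _ => by norm_num)
              (fun i _ => by exact_mod_cast hq2 (j + (i : ℕ)))
      calc (2 : ℝ) ^ (ℓ - 1) * (M : ℝ) = (M : ℝ) * (2 : ℝ) ^ (ℓ - 1) := mul_comm _ _
        _ ≤ (q (j + (i₀ : ℕ)) : ℝ) * ∏ i ∈ Finset.univ.erase i₀, (q (j + (i : ℕ)) : ℝ) :=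
            mul_le_mul (by exact_mod_cast hi₀) h2 (by positivity) (by positivity)
    rw [one_div]
    exact inv_anti₀ (by positivity) hprod
  -- the two key estimates for partial sums over a box
  have master : ∀ M : ℕ, 1 ≤ M →
      (∑ B ∈ Fintype.piFinset (fun _ : Fin ℓ => Finset.range M), PDB B) ≤ PD ∧
      PD ≤ (∑ B ∈ Fintype.piFinset (fun _ : Fin ℓ => Finset.range M), PDB B)
        + 1 / (2 ^ (ℓ - 1) * (M : ℝ)) := by
    intro M hM
    set F := Fintype.piFinset (fun _ : Fin ℓ => Finset.range M) with hF
    have hlim : Tendsto (fun n : ℕ => ∑ B ∈ F,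
        ((∑ j ∈ Finset.Icc 1 n,
          (if (∀ i : Fin ℓ, q (j + (i : ℕ)) = B i) ∧ (∀ i : Fin ℓ, D i < B i) then
            (∏ i : Fin ℓ, (B i : ℝ))⁻¹ else 0)) / (n : ℝ)))
        atTop (𝓝 (∑ B ∈ F, PDB B)) :=
      tendsto_finset_sum F fun B _ => hPDB B
    have hsum_n : ∀ n : ℕ, (∑ B ∈ F,
        ((∑ j ∈ Finset.Icc 1 n,
          (if (∀ i : Fin ℓ, q (j + (i : ℕ)) = B i) ∧ (∀ i : Fin ℓ, D i < B i) then
            (∏ i : Fin ℓ, (B i : ℝ))⁻¹ else 0)) / (n : ℝ)))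
        = (∑ j ∈ Finset.Icc 1 n,
            (if (∀ i : Fin ℓ, q (j + (i : ℕ)) < M) ∧ (∀ i : Fin ℓ, D i < q (j + (i : ℕ))) then
              (∏ i : Fin ℓ, (q (j + (i : ℕ)) : ℝ))⁻¹ else 0)) / (n : ℝ) := by
      intro n
      rw [← Finset.sum_div, Finset.sum_comm]
      congr 1
      exact Finset.sum_congr rfl fun j _ => hsum_eq M j
    constructor
    · refine le_of_tendsto_of_tendsto' hlim hPD fun n => ?_
      rw [hsum_n n]
      refine div_le_div_of_nonneg_right ?_ (Nat.cast_nonneg n)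
      · apply Finset.sum_le_sum
        intro j _
        split_ifs with h1 h2 h2
        · exact le_rfl
        · exact absurd h1.2 h2
        · positivity
        · exact le_rfl
    · have hlim2 : Tendsto (fun n : ℕ => (∑ B ∈ F,
          ((∑ j ∈ Finset.Icc 1 n,
            (if (∀ i : Fin ℓ, q (j + (i : ℕ)) = B i) ∧ (∀ i : Fin ℓ, D i < B i) then
              (∏ i : Fin ℓ, (B i : ℝ))⁻¹ else 0)) / (n : ℝ)))
          + 1 / (2 ^ (ℓ - 1) * (M : ℝ)))
          atTop (𝓝 ((∑ B ∈ F, PDB B) + 1 / (2 ^ (ℓ - 1) * (M : ℝ)))) :=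
        hlim.add tendsto_const_nhds
      refine le_of_tendsto_of_tendsto' hPD hlim2 fun n => ?_
      rw [hsum_n n]
      rcases Nat.eq_zero_or_pos n with rfl | hn
      · simp only [Finset.Icc_eq_empty_of_lt (by norm_num : (0:ℕ) < 1), Finset.sum_empty,
          Nat.cast_zero, div_zero, zero_add]
        positivity
      · have hperj : ∀ j : ℕ,
            (if ∀ i : Fin ℓ, D i < q (j + (i : ℕ)) then
              (∏ i : Fin ℓ, (q (j + (i : ℕ)) : ℝ))⁻¹ else 0)
            ≤ (if (∀ i : Fin ℓ, q (j + (i : ℕ)) < M) ∧ (∀ i : Fin ℓ, D i < q (j + (i : ℕ))) then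
                (∏ i : Fin ℓ, (q (j + (i : ℕ)) : ℝ))⁻¹ else 0)
              + 1 / (2 ^ (ℓ - 1) * (M : ℝ)) := by
          intro j
          by_cases hmem : ∀ i : Fin ℓ, q (j + (i : ℕ)) < M
          · split_ifs with h1 h2 h2
            · exact le_add_of_nonneg_right (by positivity)
            · exact absurd ⟨hmem, h1⟩ h2
            · exact absurd h2.2 h1
            · exact le_add_of_nonneg_right (by positivity)
          · have hz : (if (∀ i : Fin ℓ, q (j + (i : ℕ)) < M) ∧
                (∀ i : Fin ℓ, D i < q (j + (i : ℕ))) then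
                (∏ i : Fin ℓ, (q (j + (i : ℕ)) : ℝ))⁻¹ else 0) = 0 := by
              rw [if_neg]; rintro ⟨h, -⟩; exact hmem h
            rw [hz, zero_add]
            split_ifs with h1
            · exact htail M hM j hmem
            · positivity
        have hsums : (∑ j ∈ Finset.Icc 1 n,
            (if ∀ i : Fin ℓ, D i < q (j + (i : ℕ)) then
              (∏ i : Fin ℓ, (q (j + (i : ℕ)) : ℝ))⁻¹ else 0))
            ≤ (∑ j ∈ Finset.Icc 1 n,
              (if (∀ i : Fin ℓ, q (j + (i : ℕ)) < M) ∧ (∀ i : Fin ℓ, D i < q (j + (i : ℕ))) then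
                (∏ i : Fin ℓ, (q (j + (i : ℕ)) : ℝ))⁻¹ else 0))
              + (n : ℝ) * (1 / (2 ^ (ℓ - 1) * (M : ℝ))) := by
          calc _ ≤ ∑ j ∈ Finset.Icc 1 n,
              ((if (∀ i : Fin ℓ, q (j + (i : ℕ)) < M) ∧
                  (∀ i : Fin ℓ, D i < q (j + (i : ℕ))) then
                (∏ i : Fin ℓ, (q (j + (i : ℕ)) : ℝ))⁻¹ else 0)
                + 1 / (2 ^ (ℓ - 1) * (M : ℝ))) :=
              Finset.sum_le_sum fun j _ => hperj j
            _ = _ := by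
              rw [Finset.sum_add_distrib, Finset.sum_const, Nat.card_Icc]
              simp [nsmul_eq_mul]
        have hnpos : (0 : ℝ) < (n : ℝ) := by exact_mod_cast hn
        calc (∑ j ∈ Finset.Icc 1 n,
            (if ∀ i : Fin ℓ, D i < q (j + (i : ℕ)) then
              (∏ i : Fin ℓ, (q (j + (i : ℕ)) : ℝ))⁻¹ else 0)) / (n : ℝ)
            ≤ ((∑ j ∈ Finset.Icc 1 n,
              (if (∀ i : Fin ℓ, q (j + (i : ℕ)) < M) ∧ (∀ i : Fin ℓ, D i < q (j + (i : ℕ))) then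
                (∏ i : Fin ℓ, (q (j + (i : ℕ)) : ℝ))⁻¹ else 0))
              + (n : ℝ) * (1 / (2 ^ (ℓ - 1) * (M : ℝ)))) / (n : ℝ) :=
            div_le_div_of_nonneg_right hsums hnpos.le
          _ = _ := by
            rw [add_div, mul_div_cancel_left₀ _ (ne_of_gt hnpos)]
  -- summability
  have hsummable : Summable PDB := by
    refine summable_of_sum_le (c := PD) (fun B => hPDBnn B) fun u => ?_
    set M := (u.sup fun B => Finset.univ.sup B) + 1 with hM
    have hsub : u ⊆ Fintype.piFinset (fun _ : Fin ℓ => Finset.range M) := by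
      intro B hB
      refine Fintype.mem_piFinset.2 fun i => Finset.mem_range.2 ?_
      exact Nat.lt_succ_of_le ((Finset.le_sup (Finset.mem_univ i)).trans (Finset.le_sup hB))
    calc ∑ B ∈ u, PDB B
        ≤ ∑ B ∈ Fintype.piFinset (fun _ : Fin ℓ => Finset.range M), PDB B :=
          Finset.sum_le_sum_of_subset_of_nonneg hsub fun B _ _ => hPDBnn B
      _ ≤ PD := (master M (Nat.le_add_left 1 _)).1
  refine le_antisymm (Summable.tsum_le_of_sum_le hsummable fun u => ?_) ?_
  · set M := (u.sup fun B => Finset.univ.sup B) + 1 with hM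
    have hsub : u ⊆ Fintype.piFinset (fun _ : Fin ℓ => Finset.range M) := by
      intro B hB
      refine Fintype.mem_piFinset.2 fun i => Finset.mem_range.2 ?_
      exact Nat.lt_succ_of_le ((Finset.le_sup (Finset.mem_univ i)).trans (Finset.le_sup hB))
    calc ∑ B ∈ u, PDB B
        ≤ ∑ B ∈ Fintype.piFinset (fun _ : Fin ℓ => Finset.range M), PDB B :=
          Finset.sum_le_sum_of_subset_of_nonneg hsub fun B _ _ => hPDBnn B
      _ ≤ PD := (master M (Nat.le_add_left 1 _)).1
  · by_contra hlt
    push_neg at hlt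
    obtain ⟨M, hMε⟩ := exists_nat_one_div_lt (sub_pos.2 hlt)
    have h1 := (master (M + 1) (Nat.le_add_left 1 M)).2
    have h2 : (∑ B ∈ Fintype.piFinset (fun _ : Fin ℓ => Finset.range (M + 1)), PDB B)
        ≤ ∑' B : Fin ℓ → ℕ, PDB B :=
      Summable.sum_le_tsum _ (fun B _ => hPDBnn B) hsummable
    have h3 : 1 / (2 ^ (ℓ - 1) * ((M + 1 : ℕ) : ℝ)) ≤ 1 / ((M : ℝ) + 1) := by
      apply one_div_le_one_div_of_le (by positivity)
      push_cast
      nlinarith [one_le_pow₀ (by norm_num : (1:ℝ) ≤ 2) (n := ℓ - 1), Nat.cast_nonneg (α := ℝ) M]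
    linarith
end

section
/- Let g ≥ 2, I ∈ ℕ, and let (c_n)_{n≥1} be a sequence of positive integers (c_n = log_g q_n for a g-power basic sequence) generated as c_n = h(Tⁿx) where x is a generic point of a measure-preserving system and h is integrable with ∫ h dμ = I < ∞. Define a_0 = 0 and a_n = a_{n−1} + c_n, and for k ≥ 0 let A_k = A ∪ (A+1) ∪ ⋯ ∪ (A+k) where A = {a_n : n ≥ 0}. Then the natural density of A_k exists and equals (1/I)∫ min(k+1, h) dμ = 1 − (1/I)∫_{h > k+1} (h − k − 1) dμ. -/
open Filter MeasureTheory Topology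


section Aux
variable {k : ℕ} {c a : ℕ → ℕ}

lemma aux_sum (ha0 : a 0 = 0) (haS : ∀ n, a (n + 1) = a n + c (n + 1)) :
    ∀ n, a n = ∑ i ∈ Finset.Icc 1 n, c i := by
  intro n
  induction n with
  | zero => simpa using ha0
  | succ n ih => rw [haS, ih, Finset.sum_Icc_succ_top (by omega)]

lemma aux_mono (haS : ∀ n, a (n + 1) = a n + c (n + 1)) : Monotone a :=
  monotone_nat_of_le_succ fun n => by rw [haS]; omega

lemma aux_le_self (ha0 : a 0 = 0) (hc1 : ∀ n, 1 ≤ c n)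
    (haS : ∀ n, a (n + 1) = a n + c (n + 1)) : ∀ n, n ≤ a n := by
  intro n; induction n with
  | zero => omega
  | succ n ih => have := hc1 (n + 1); rw [haS]; omega

open Classical in
noncomputable def countk (k : ℕ) (a : ℕ → ℕ) (N : ℕ) : ℕ :=
  ((Finset.Ioc 0 N).filter (fun m => ∃ n t : ℕ, t ≤ k ∧ m = a n + t)).card

lemma aux_char (haS : ∀ n, a (n + 1) = a n + c (n + 1))
    {M m : ℕ} (hm1 : a M < m) (hm2 : m ≤ a (M + 1)) :
    (∃ n t : ℕ, t ≤ k ∧ m = a n + t) ↔ (m ≤ a M + k ∨ m = a (M + 1)) := by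
  constructor
  · rintro ⟨n, t, ht, rfl⟩
    rcases le_or_gt n M with hn | hn
    · left; have := aux_mono haS hn; omega
    · right
      have h3 : a (M + 1) ≤ a n := aux_mono haS hn
      omega
  · rintro (hm | rfl)
    · exact ⟨M, m - a M, by omega, by omega⟩
    · exact ⟨M + 1, 0, by omega, by omega⟩

lemma countk_mono (k : ℕ) (a : ℕ → ℕ) : Monotone (countk k a) := by
  intro N1 N2 hN
  classical
  exact Finset.card_le_card (Finset.filter_subset_filter _ (Finset.Ioc_subset_Ioc_right hN))

lemma countk_at (hc1 : ∀ n, 1 ≤ c n) (ha0 : a 0 = 0)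
    (haS : ∀ n, a (n + 1) = a n + c (n + 1)) (M : ℕ) :
    countk k a (a M) = ∑ n ∈ Finset.Icc 1 M, min (k + 1) (c n) := by
  classical
  induction M with
  | zero => simp [countk, ha0]
  | succ M ih =>
    have hmono : a M ≤ a (M + 1) := aux_mono haS (by omega)
    rw [Finset.sum_Icc_succ_top (by omega), ← ih]
    unfold countk
    rw [← Finset.Ioc_union_Ioc_eq_Ioc (Nat.zero_le (a M)) hmono,
        Finset.filter_union,
        Finset.card_union_of_disjoint (Finset.disjoint_filter_filter (by
          rw [Finset.disjoint_left]
          intro y hy hy2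
          rw [Finset.mem_Ioc] at hy hy2
          omega))]
    congr 1
    have hcM : a (M + 1) = a M + c (M + 1) := haS M
    rcases le_or_gt (c (M + 1)) (k + 1) with hle | hlt
    · have hset : (Finset.Ioc (a M) (a (M + 1))).filter
          (fun m => ∃ n t : ℕ, t ≤ k ∧ m = a n + t) = Finset.Ioc (a M) (a (M + 1)) := by
        apply Finset.filter_true_of_mem
        intro m hm
        rw [Finset.mem_Ioc] at hm
        rw [aux_char haS hm.1 hm.2]
        omega
      rw [hset, Nat.card_Ioc]
      omega
    · have hset : (Finset.Ioc (a M) (a (M + 1))).filter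
          (fun m => ∃ n t : ℕ, t ≤ k ∧ m = a n + t)
          = insert (a (M + 1)) (Finset.Ioc (a M) (a M + k)) := by
        ext m
        simp only [Finset.mem_filter, Finset.mem_Ioc, Finset.mem_insert]
        constructor
        · rintro ⟨hm, hP⟩
          rw [aux_char haS hm.1 hm.2] at hP
          omega
        · intro hm
          have hb : a M < m ∧ m ≤ a (M + 1) := by omega
          exact ⟨hb, (aux_char haS hb.1 hb.2).mpr (by omega)⟩
      rw [hset, Finset.card_insert_of_notMem (by simp [Finset.mem_Ioc]; omega),
        Nat.card_Ioc]
      omega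

end Aux

lemma min_cast_eq (k j : ℕ) :
    ((min (k + 1) j : ℕ) : ℝ)
      = (k + 1 : ℝ) - ∑ m ∈ Finset.range (k + 1),
          (if j = m then ((k + 1 - m : ℕ) : ℝ) else 0) := by
  rcases le_or_gt j k with hj | hj
  · rw [Finset.sum_ite_eq (Finset.range (k + 1)) j, if_pos (Finset.mem_range.2 (by omega))]
    rw [min_eq_right (by omega), Nat.cast_sub (by omega : j ≤ k + 1)]
    push_cast
    ring
  · rw [Finset.sum_eq_zero (fun m hm => by
      rw [Finset.mem_range] at hm
      rw [if_neg (by omega)]), min_eq_left (by omega)]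
    push_cast
    ring

lemma integral_min_eq {X : Type*} [MeasurableSpace X] (μ : Measure X) [IsProbabilityMeasure μ]
    (h : X → ℕ) (hmeas : Measurable h) (k : ℕ) :
    ∫ x, ((min (k + 1) (h x) : ℕ) : ℝ) ∂μ
      = (k + 1 : ℝ) - ∑ m ∈ Finset.range (k + 1),
          ((k + 1 - m : ℕ) : ℝ) * (μ (h ⁻¹' {m})).toReal := by
  have hind : ∀ m : ℕ, (fun x => if h x = m then ((k + 1 - m : ℕ) : ℝ) else 0)
      = (h ⁻¹' {m}).indicator (fun _ => ((k + 1 - m : ℕ) : ℝ)) := by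
    intro m
    funext y
    by_cases hy : h y = m <;> simp [Set.indicator, Set.mem_preimage, hy]
  have hintg : ∀ m : ℕ, Integrable (fun x => if h x = m then ((k + 1 - m : ℕ) : ℝ) else 0) μ := by
    intro m
    rw [hind m]
    exact (integrable_const _).indicator (hmeas (measurableSet_singleton m))
  simp_rw [min_cast_eq k]
  rw [integral_sub (integrable_const _) (integrable_finset_sum _ (fun m _ => hintg m)),
    integral_const, integral_finset_sum _ (fun m _ => hintg m)]
  simp only [measure_univ, probReal_univ, ENNReal.toReal_one, smul_eq_mul, one_mul]
  congr 1
  refine Finset.sum_congr rfl (fun m _ => ?_)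
  rw [hind m, integral_indicator_const _ (hmeas (measurableSet_singleton m)), smul_eq_mul,
    mul_comm, measureReal_def]

lemma tendsto_cesaro_min (c : ℕ → ℕ) (k : ℕ) (ν : ℕ → ℝ)
    (hfreq : ∀ m : ℕ, Tendsto (fun N : ℕ =>
        ((((Finset.Icc 1 N).filter (fun n => c n = m)).card : ℝ)) / N) atTop (𝓝 (ν m))) :
    Tendsto (fun N : ℕ => ((∑ n ∈ Finset.Icc 1 N, min (k + 1) (c n) : ℕ) : ℝ) / N) atTop
      (𝓝 ((k + 1 : ℝ) - ∑ m ∈ Finset.range (k + 1), ((k + 1 - m : ℕ) : ℝ) * ν m)) := by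
  have hSum : ∀ N : ℕ, ((∑ n ∈ Finset.Icc 1 N, min (k + 1) (c n) : ℕ) : ℝ)
      = (N : ℝ) * (k + 1) - ∑ m ∈ Finset.range (k + 1),
          ((k + 1 - m : ℕ) : ℝ) * (((Finset.Icc 1 N).filter (fun n => c n = m)).card : ℝ) := by
    intro N
    rw [Nat.cast_sum]
    simp_rw [min_cast_eq k]
    rw [Finset.sum_sub_distrib, Finset.sum_const, Nat.card_Icc, Finset.sum_comm]
    congr 1
    · simp [nsmul_eq_mul]
      ring
    · refine Finset.sum_congr rfl (fun m _ => ?_)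
      rw [← Finset.sum_filter, Finset.sum_const, nsmul_eq_mul, mul_comm]
  have h1 : Tendsto (fun N : ℕ => (k + 1 : ℝ) - ∑ m ∈ Finset.range (k + 1),
      ((k + 1 - m : ℕ) : ℝ) * ((((Finset.Icc 1 N).filter (fun n => c n = m)).card : ℝ) / N))
      atTop (𝓝 ((k + 1 : ℝ) - ∑ m ∈ Finset.range (k + 1), ((k + 1 - m : ℕ) : ℝ) * ν m)) := by
    apply Tendsto.const_sub
    exact tendsto_finset_sum _ (fun m _ => (hfreq m).const_mul _)
  refine h1.congr' ?_
  filter_upwards [eventually_ge_atTop 1] with N hN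
  have hN0 : (N : ℝ) ≠ 0 := Nat.cast_ne_zero.2 (by omega)
  rw [hSum N, sub_div, mul_comm (N : ℝ) ((k : ℝ) + 1), mul_div_assoc, div_self hN0, mul_one, Finset.sum_div]
  congr 1
  · exact (Finset.sum_congr rfl (fun m _ => by rw [mul_div_assoc])).symm


/-- Density of the set `A_k = A ∪ (A+1) ∪ ⋯ ∪ (A+k)`, where `A` is the set of partial
sums of a dynamically generated sequence `c n = h (Tⁿ x)` of positive integers with
`∫ h dμ = I`: the natural density of `A_k` exists and equals
`(1/I) ∫ min (k+1) h dμ = 1 - (1/I) ∫_{h > k+1} (h - k - 1) dμ`. -/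
theorem stmt_9 {X : Type*} [MeasurableSpace X] (μ : Measure X) [IsProbabilityMeasure μ]
    (g : ℕ) (hg : 2 ≤ g)
    (T : X → X) (hT : MeasurePreserving T μ μ)
    (h : X → ℕ) (hmeas : Measurable h) (h1 : ∀ x, 1 ≤ h x)
    (hInt : Integrable (fun x => (h x : ℝ)) μ)
    (I : ℝ) (hI : ∫ x, (h x : ℝ) ∂μ = I)
    (x : X) (c : ℕ → ℕ) (hc : ∀ n, c n = h (T^[n] x))
    (q : ℕ → ℕ) (hq : ∀ n, q n = g ^ c n)
    (hfreq : ∀ m : ℕ,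
      Tendsto (fun N : ℕ => ({n : ℕ | 1 ≤ n ∧ n ≤ N ∧ c n = m}.ncard : ℝ) / N)
        atTop (𝓝 ((μ (h ⁻¹' {m})).toReal)))
    (hces : Tendsto (fun N : ℕ => (∑ n ∈ Finset.Icc 1 N, (c n : ℝ)) / N) atTop (𝓝 I))
    (a : ℕ → ℕ) (ha0 : a 0 = 0) (haS : ∀ n, a (n + 1) = a n + c (n + 1))
    (k : ℕ) :
    Tendsto (fun N : ℕ =>
        ({m : ℕ | 1 ≤ m ∧ m ≤ N ∧ ∃ n t : ℕ, t ≤ k ∧ m = a n + t}.ncard : ℝ) / N)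
      atTop (𝓝 ((1 / I) * ∫ x, ((min (k + 1) (h x) : ℕ) : ℝ) ∂μ)) ∧
    (1 / I) * ∫ x, ((min (k + 1) (h x) : ℕ) : ℝ) ∂μ
      = 1 - (1 / I) * ∫ x in {x | k + 1 < h x}, ((h x : ℝ) - (k + 1)) ∂μ := by
  classical
  have hc1 : ∀ n, 1 ≤ c n := fun n => by rw [hc]; exact h1 _
  have haL : ∀ n, n ≤ a n := aux_le_self ha0 hc1 haS
  -- Cesàro limit of a n / n
  have hr : Tendsto (fun n : ℕ => (a n : ℝ) / n) atTop (𝓝 I) := by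
    refine hces.congr (fun N => ?_)
    rw [aux_sum ha0 haS N]
    push_cast
    ring
  have hI1 : (1 : ℝ) ≤ I := by
    refine ge_of_tendsto hces ?_
    filter_upwards [eventually_ge_atTop 1] with N hN
    have hNpos : (0 : ℝ) < N := by exact_mod_cast hN
    rw [le_div_iff₀ hNpos, one_mul]
    calc (N : ℝ) = ∑ _n ∈ Finset.Icc 1 N, (1 : ℝ) := by simp [Nat.card_Icc]
      _ ≤ ∑ n ∈ Finset.Icc 1 N, (c n : ℝ) :=
          Finset.sum_le_sum (fun i _ => by exact_mod_cast hc1 i)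
  have hI0 : I ≠ 0 := by linarith
  -- the index function
  set Mf : ℕ → ℕ := fun N => Nat.findGreatest (fun n => a n ≤ N) N with hMfdef
  have hA : ∀ N, a (Mf N) ≤ N := fun N =>
    Nat.findGreatest_spec (P := fun n => a n ≤ N) (Nat.zero_le N)
      (by show a 0 ≤ N; rw [ha0]; exact Nat.zero_le N)
  have hB : ∀ N, N < a (Mf N + 1) := by
    intro N
    by_contra hcon
    push_neg at hcon
    have h2 : Mf N + 1 ≤ N := le_trans (haL _) hcon
    have h3 : Mf N + 1 ≤ Mf N := Nat.le_findGreatest (P := fun n => a n ≤ N) h2 hcon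
    omega
  have hMtop : Tendsto Mf atTop atTop := by
    rw [tendsto_atTop]
    intro K
    filter_upwards [eventually_ge_atTop (a K)] with N hN
    exact Nat.le_findGreatest (P := fun n => a n ≤ N) (le_trans (haL K) hN) hN
  -- N / Mf N → I
  have hcomp : Tendsto (fun N => (a (Mf N) : ℝ) / (Mf N)) atTop (𝓝 I) := hr.comp hMtop
  have hcomp1 : Tendsto (fun N => (a (Mf N + 1) : ℝ) / (Mf N + 1 : ℕ)) atTop (𝓝 I) :=
    hr.comp ((tendsto_add_atTop_nat 1).comp hMtop)
  have hratio : Tendsto (fun N => ((Mf N + 1 : ℕ) : ℝ) / (Mf N)) atTop (𝓝 1) := by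
    have hbase : Tendsto (fun n : ℕ => ((n + 1 : ℕ) : ℝ) / n) atTop (𝓝 1) := by
      have h0 : Tendsto (fun n : ℕ => 1 + 1 / (n : ℝ)) atTop (𝓝 (1 + 0)) :=
        tendsto_const_nhds.add tendsto_one_div_atTop_nhds_zero_nat
      rw [add_zero] at h0
      refine h0.congr' ?_
      filter_upwards [eventually_ge_atTop 1] with n hn
      have hn0 : (n : ℝ) ≠ 0 := Nat.cast_ne_zero.2 (by omega)
      push_cast
      rw [add_div, div_self hn0]
    exact hbase.comp hMtop
  have hupperI : Tendsto (fun N => (a (Mf N + 1) : ℝ) / (Mf N)) atTop (𝓝 I) := by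
    have := hcomp1.mul hratio
    rw [mul_one] at this
    refine this.congr (fun N => ?_)
    have hM1 : ((Mf N + 1 : ℕ) : ℝ) ≠ 0 := Nat.cast_ne_zero.2 (by omega)
    rw [div_mul_div_comm, mul_comm ((Mf N + 1 : ℕ) : ℝ) ((Mf N : ℝ)),
      mul_div_mul_right _ _ hM1]
  have hNM : Tendsto (fun N : ℕ => (N : ℝ) / (Mf N)) atTop (𝓝 I) := by
    refine tendsto_of_tendsto_of_tendsto_of_le_of_le' hcomp hupperI ?_ ?_
    · filter_upwards with N
      gcongr
      exact_mod_cast hA N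
    · filter_upwards with N
      gcongr
      exact_mod_cast (hB N).le
  have hMN : Tendsto (fun N : ℕ => (Mf N : ℝ) / N) atTop (𝓝 (1 / I)) := by
    have := hNM.inv₀ hI0
    rw [← one_div] at this
    refine this.congr' ?_
    filter_upwards [eventually_ge_atTop 1] with N hN
    rw [inv_div]
  -- frequencies as Finset cards
  have hfreq' : ∀ m : ℕ, Tendsto (fun N : ℕ =>
      ((((Finset.Icc 1 N).filter (fun n => c n = m)).card : ℝ)) / N) atTop
      (𝓝 ((μ (h ⁻¹' {m})).toReal)) := by
    intro m
    refine (hfreq m).congr (fun N => ?_)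
    congr 2
    rw [show {n : ℕ | 1 ≤ n ∧ n ≤ N ∧ c n = m}
        = ↑((Finset.Icc 1 N).filter (fun n => c n = m)) by
      ext n
      simp only [Set.mem_setOf_eq, Finset.coe_filter, Finset.mem_Icc]
      tauto]
    rw [Set.ncard_coe_finset]
  set L := ∫ x, ((min (k + 1) (h x) : ℕ) : ℝ) ∂μ with hLdef
  have hS : Tendsto (fun M : ℕ =>
      ((∑ n ∈ Finset.Icc 1 M, min (k + 1) (c n) : ℕ) : ℝ) / M) atTop (𝓝 L) := by
    rw [hLdef, integral_min_eq μ h hmeas k]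
    exact tendsto_cesaro_min c k _ hfreq'
  -- identify the set with countk
  have hsetc : ∀ N : ℕ, ({m : ℕ | 1 ≤ m ∧ m ≤ N ∧ ∃ n t : ℕ, t ≤ k ∧ m = a n + t}.ncard : ℝ)
      = (countk k a N : ℝ) := by
    intro N
    congr 1
    unfold countk
    rw [show {m : ℕ | 1 ≤ m ∧ m ≤ N ∧ ∃ n t : ℕ, t ≤ k ∧ m = a n + t}
        = ↑((Finset.Ioc 0 N).filter (fun m => ∃ n t : ℕ, t ≤ k ∧ m = a n + t)) by
      ext m
      simp only [Set.mem_setOf_eq, Finset.coe_filter, Finset.mem_Ioc]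
      constructor
      · rintro ⟨hm1, hm2, hm3⟩; exact ⟨⟨by omega, hm2⟩, hm3⟩
      · rintro ⟨⟨hm1, hm2⟩, hm3⟩; exact ⟨by omega, hm2, hm3⟩]
    rw [Set.ncard_coe_finset]
  -- bounds for countk
  have hcnt := fun M => countk_at (k := k) hc1 ha0 haS M
  have hb1 : ∀ N, (∑ n ∈ Finset.Icc 1 (Mf N), min (k + 1) (c n)) ≤ countk k a N :=
    fun N => (hcnt (Mf N)) ▸ countk_mono k a (hA N)
  have hb2 : ∀ N, countk k a N ≤ (∑ n ∈ Finset.Icc 1 (Mf N), min (k + 1) (c n)) + (k + 1) := by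
    intro N
    have h1' : countk k a N ≤ countk k a (a (Mf N + 1)) := countk_mono k a (le_of_lt (hB N))
    rw [hcnt (Mf N + 1), Finset.sum_Icc_succ_top (by omega)] at h1'
    have hmin : min (k + 1) (c (Mf N + 1)) ≤ k + 1 := min_le_left _ _
    omega
  -- squeeze
  have hSM : Tendsto (fun N : ℕ =>
      ((∑ n ∈ Finset.Icc 1 (Mf N), min (k + 1) (c n) : ℕ) : ℝ) / N) atTop (𝓝 (L * (1 / I))) := by
    have hcompS : Tendsto (fun N : ℕ =>
        ((∑ n ∈ Finset.Icc 1 (Mf N), min (k + 1) (c n) : ℕ) : ℝ) / (Mf N)) atTop (𝓝 L) :=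
      hS.comp hMtop
    have hmul := hcompS.mul hMN
    refine hmul.congr' ?_
    filter_upwards [hMtop.eventually_ge_atTop 1, eventually_ge_atTop 1] with N hMN1 hN1
    have hM0 : (Mf N : ℝ) ≠ 0 := Nat.cast_ne_zero.2 (by omega)
    field_simp
  have hupper : Tendsto (fun N : ℕ =>
      ((∑ n ∈ Finset.Icc 1 (Mf N), min (k + 1) (c n) : ℕ) : ℝ) / N + ((k : ℝ) + 1) / N)
      atTop (𝓝 (L * (1 / I))) := by
    have := hSM.add (tendsto_const_div_atTop_nhds_zero_nat ((k : ℝ) + 1))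
    rwa [add_zero] at this
  have hdensity : Tendsto (fun N : ℕ => ((countk k a N : ℝ)) / N) atTop (𝓝 (L * (1 / I))) := by
    refine tendsto_of_tendsto_of_tendsto_of_le_of_le' hSM hupper ?_ ?_
    · filter_upwards with N
      gcongr
      exact_mod_cast hb1 N
    · filter_upwards [eventually_ge_atTop 1] with N hN
      rw [← add_div]
      gcongr
      have := hb2 N
      push_cast
      exact_mod_cast this
  constructor
  · rw [mul_comm (1 / I) L]
    refine hdensity.congr (fun N => ?_)
    rw [hsetc N]
  · -- the integral identity
    have hsmeas : MeasurableSet {y : X | k + 1 < h y} := by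
      have : {y : X | k + 1 < h y} = h ⁻¹' (Set.Ioi (k + 1)) := rfl
      rw [this]
      exact hmeas measurableSet_Ioi
    have hmin_meas : Measurable (fun y : X => ((min (k + 1) (h y) : ℕ) : ℝ)) := by
      have : (fun y : X => ((min (k + 1) (h y) : ℕ) : ℝ))
          = (fun j : ℕ => ((min (k + 1) j : ℕ) : ℝ)) ∘ h := rfl
      rw [this]
      exact (measurable_from_top).comp hmeas
    have hint_min : Integrable (fun y : X => ((min (k + 1) (h y) : ℕ) : ℝ)) μ := by
      refine Integrable.mono' (integrable_const ((k : ℝ) + 1)) hmin_meas.aestronglyMeasurable ?_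
      filter_upwards with y
      rw [Real.norm_eq_abs, abs_of_nonneg (by positivity)]
      have : min (k + 1) (h y) ≤ k + 1 := min_le_left _ _
      exact_mod_cast this
    have hkey : (fun y : X => ({y : X | k + 1 < h y}).indicator
        (fun y => (h y : ℝ) - ((k : ℝ) + 1)) y)
        = fun y : X => (h y : ℝ) - ((min (k + 1) (h y) : ℕ) : ℝ) := by
      funext y
      by_cases hy : k + 1 < h y
      · rw [Set.indicator_apply]
        simp only [Set.mem_setOf_eq]
        rw [if_pos hy, min_eq_left (by omega)]
        push_cast
        ring
      · rw [Set.indicator_apply]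
        simp only [Set.mem_setOf_eq]
        rw [if_neg hy, min_eq_right (by omega)]
        ring
    have hint_eq : ∫ y in {y : X | k + 1 < h y}, ((h y : ℝ) - (k + 1)) ∂μ = I - L := by
      rw [← integral_indicator hsmeas]
      calc ∫ y, ({y : X | k + 1 < h y}).indicator (fun y => (h y : ℝ) - ((k : ℝ) + 1)) y ∂μ
          = ∫ y, ((h y : ℝ) - ((min (k + 1) (h y) : ℕ) : ℝ)) ∂μ := by rw [hkey]
        _ = I - L := by rw [integral_sub hInt hint_min, hI, ← hLdef]
    rw [hint_eq]
    field_simp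
    ring
end

section
/- For every dynamically generated basic sequence Q, the set of Q-ratio normal numbers coincides with the set of Q-normal numbers: 𝓡𝓝(Q) = 𝓝(Q). -/
open Filter Topology

/-- `q 1 * q 2 * ⋯ * q n`. -/
noncomputable def prodQ (Q : ℕ → ℕ) (n : ℕ) : ℕ := ∏ i ∈ Finset.Icc 1 n, Q i

/-- The `n`-th digit (`n ≥ 1`) of the `Q`-Cantor series expansion of `y`. -/
noncomputable def qdigit (Q : ℕ → ℕ) (y : ℝ) (n : ℕ) : ℕ :=
  (⌊(Q n : ℝ) * Int.fract ((prodQ Q (n - 1) : ℝ) * y)⌋).toNat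

/-- Expected number `Q_n(D)` of occurrences of the digit block `D`. -/
noncomputable def QnD (Q : ℕ → ℕ) {ℓ : ℕ} (D : Fin ℓ → ℕ) (n : ℕ) : ℝ :=
  ∑ j ∈ Finset.Icc 1 n,
    (if ∀ i : Fin ℓ, D i < Q (j + (i : ℕ)) then (∏ i : Fin ℓ, (Q (j + (i : ℕ)) : ℝ))⁻¹ else 0)

/-- Number `N_n^Q(D, y)` of occurrences of the digit block `D` among the first `n`
positions of the `Q`-Cantor expansion of `y`. -/
noncomputable def NnD (Q : ℕ → ℕ) (y : ℝ) {ℓ : ℕ} (D : Fin ℓ → ℕ) (n : ℕ) : ℝ :=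
  ({j : ℕ | 1 ≤ j ∧ j ≤ n ∧ ∀ i : Fin ℓ, qdigit Q y (j + (i : ℕ)) = D i}.ncard : ℝ)

/-- `y` is `Q`-normal. -/
def QNormalNum (Q : ℕ → ℕ) (y : ℝ) : Prop :=
  ∀ (ℓ : ℕ) (D : Fin ℓ → ℕ), Tendsto (fun n => QnD Q D n) atTop atTop →
    Tendsto (fun n => NnD Q y D n / QnD Q D n) atTop (𝓝 1)

/-- `y` is `Q`-ratio normal. -/
def QRatioNormalNum (Q : ℕ → ℕ) (y : ℝ) : Prop :=
  ∀ (ℓ : ℕ) (D₁ D₂ : Fin ℓ → ℕ),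
    Tendsto (fun n => min (QnD Q D₁ n) (QnD Q D₂ n)) atTop atTop →
    Tendsto (fun n => (NnD Q y D₁ n / QnD Q D₁ n) / (NnD Q y D₂ n / QnD Q D₂ n))
      atTop (𝓝 1)

/- ### Auxiliary lemmas -/

private lemma ncard_filter_eq (n : ℕ) (P : ℕ → Prop) [DecidablePred P] :
    {j : ℕ | 1 ≤ j ∧ j ≤ n ∧ P j}.ncard = ((Finset.Icc 1 n).filter P).card := by
  rw [← Set.ncard_coe_finset]
  congr 1
  ext j
  simp [Finset.mem_Icc, and_assoc]

private lemma qdigit_lt_q (Q : ℕ → ℕ) (hQ : ∀ n, 2 ≤ Q n) (y : ℝ) (m : ℕ) :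
    qdigit Q y m < Q m := by
  have hQ0 : (0:ℝ) < Q m := by
    have := hQ m; positivity
  have hfr : Int.fract ((prodQ Q (m - 1) : ℝ) * y) < 1 := Int.fract_lt_one _
  have hfr0 : (0:ℝ) ≤ Int.fract ((prodQ Q (m - 1) : ℝ) * y) := Int.fract_nonneg _
  have hlt : (Q m : ℝ) * Int.fract ((prodQ Q (m - 1) : ℝ) * y) < (Q m : ℝ) := by nlinarith
  have hfl : ⌊(Q m : ℝ) * Int.fract ((prodQ Q (m - 1) : ℝ) * y)⌋ < (Q m : ℤ) := by
    apply Int.floor_lt.2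
    exact_mod_cast hlt
  have h2 := hQ m
  unfold qdigit
  omega

private lemma NnD_eq_card (Q : ℕ → ℕ) (y : ℝ) {ℓ : ℕ} (D : Fin ℓ → ℕ) (n : ℕ) :
    NnD Q y D n
      = (((Finset.Icc 1 n).filter
          fun j => ∀ i : Fin ℓ, qdigit Q y (j + (i : ℕ)) = D i).card : ℝ) := by
  unfold NnD
  rw [ncard_filter_eq]

private lemma NnD_nonneg (Q : ℕ → ℕ) (y : ℝ) {ℓ : ℕ} (D : Fin ℓ → ℕ) (n : ℕ) :
    0 ≤ NnD Q y D n := by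
  unfold NnD; positivity

private lemma QnD_nonneg (Q : ℕ → ℕ) {ℓ : ℕ} (D : Fin ℓ → ℕ) (n : ℕ) :
    0 ≤ QnD Q D n := by
  unfold QnD
  apply Finset.sum_nonneg
  intro j _
  split
  · positivity
  · exact le_rfl

private lemma min_tendsto_atTop {f g : ℕ → ℝ} (hf : Tendsto f atTop atTop)
    (hg : Tendsto g atTop atTop) :
    Tendsto (fun n => min (f n) (g n)) atTop atTop := by
  rw [tendsto_atTop] at *
  intro b
  filter_upwards [hf b, hg b] with n h1 h2
  exact le_min h1 h2

private lemma card_filter_mem_eq_sum {α β : Type*} [DecidableEq β] (s : Finset α)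
    (t : Finset β) (f : α → β) [DecidableEq α] :
    (s.filter fun a => f a ∈ t).card = ∑ b ∈ t, (s.filter fun a => f a = b).card := by
  classical
  rw [Finset.card_eq_sum_card_fiberwise
    (f := f) (s := s.filter fun a => f a ∈ t) (t := t)
    (fun a ha => (Finset.mem_filter.1 ha).2)]
  refine Finset.sum_congr rfl fun b hb => ?_
  congr 1
  ext a
  simp only [Finset.mem_filter]
  constructor
  · rintro ⟨⟨ha, _⟩, h2⟩; exact ⟨ha, h2⟩
  · rintro ⟨ha, h2⟩; exact ⟨⟨ha, h2 ▸ hb⟩, h2⟩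

set_option maxHeartbeats 1000000 in
/-- For a dynamically generated basic sequence `Q` (all word densities exist, words of
density zero do not occur, and the densities of words of each length sum to one), ratio
normality and normality coincide: `𝓡𝓝(Q) = 𝓝(Q)`. -/
theorem stmt_19 (Q : ℕ → ℕ) (hQ : ∀ n, 2 ≤ Q n)
    (dens : ∀ k : ℕ, (Fin k → ℕ) → ℝ)
    (hdens : ∀ (k : ℕ) (w : Fin k → ℕ),
      Tendsto (fun N : ℕ =>
        ({n : ℕ | 1 ≤ n ∧ n ≤ N ∧ ∀ i : Fin k, Q (n + (i : ℕ)) = w i}.ncard : ℝ) / N)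
        atTop (𝓝 (dens k w)))
    (hzero : ∀ (k : ℕ) (w : Fin k → ℕ), dens k w = 0 →
      ∀ n : ℕ, ¬ ∀ i : Fin k, Q (n + (i : ℕ)) = w i)
    (hone : ∀ k : ℕ, ∑' w : Fin k → ℕ, dens k w = 1)
    (y : ℝ) (hy : y ∈ Set.Ico (0:ℝ) 1) :
    QRatioNormalNum Q y ↔ QNormalNum Q y := by
  classical
  constructor
  · -- hard direction: ratio normal → normal

    intro hrn ℓ D hD
    -- window-count as Finset card
    set A : (Fin ℓ → ℕ) → ℕ → ℕ := fun w n =>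
      ((Finset.Icc 1 n).filter fun j => ∀ i : Fin ℓ, Q (j + (i : ℕ)) = w i).card with hAdef
    have hA : ∀ w : Fin ℓ → ℕ,
        Tendsto (fun n => (A w n : ℝ) / n) atTop (𝓝 (dens ℓ w)) := by
      intro w
      refine (hdens ℓ w).congr fun n => ?_
      rw [ncard_filter_eq]
    -- densities are nonnegative
    have hnn : ∀ w : Fin ℓ → ℕ, 0 ≤ dens ℓ w := by
      intro w
      refine ge_of_tendsto' (hA w) fun n => by positivity
    -- densities are summable with sum 1
    have hsum : Summable (dens ℓ) := by
      by_contra h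
      have := tsum_eq_zero_of_not_summable h
      rw [hone ℓ] at this
      norm_num at this
    have hhs : Tendsto (fun s : Finset (Fin ℓ → ℕ) => ∑ w ∈ s, dens ℓ w)
        atTop (𝓝 1) := by
      have := hsum.hasSum
      rwa [hone ℓ] at this
    rw [Metric.tendsto_nhds]
    intro ε hε
    set θ : ℝ := min (ε / 9) (1 / 2) with hθdef
    have hθ0 : 0 < θ := lt_min (by linarith) (by norm_num)
    have hθε : θ ≤ ε / 9 := min_le_left _ _
    have hθh : θ ≤ 1 / 2 := min_le_right _ _
    -- choose a finite set of windows of density close to 1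
    obtain ⟨W₀, hW₀⟩ : ∃ s : Finset (Fin ℓ → ℕ), 1 - θ / 2 < ∑ w ∈ s, dens ℓ w :=
      (hhs.eventually (eventually_gt_nhds (by linarith))).exists
    set W : Finset (Fin ℓ → ℕ) := W₀.filter fun w => 0 < dens ℓ w with hWdef
    have hWsum : 1 - θ / 2 < ∑ w ∈ W, dens ℓ w := by
      rw [hWdef, Finset.sum_filter_of_ne]
      · exact hW₀
      · intro w _ hne
        exact lt_of_le_of_ne (hnn w) (Ne.symm hne)
    have hWpos : ∀ w ∈ W, 0 < dens ℓ w := fun w hw => (Finset.mem_filter.1 hw).2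
    -- every window in W occurs
    have hWocc : ∀ w ∈ W, ∃ j : ℕ, ∀ i : Fin ℓ, Q (j + (i : ℕ)) = w i := by
      intro w hw
      by_contra h
      push_neg at h
      have hzeroA : ∀ n, A w n = 0 := by
        intro n
        rw [hAdef]
        simp only [Finset.card_eq_zero, Finset.filter_eq_empty_iff]
        intro j _
        intro hj
        obtain ⟨i, hi⟩ := h j
        exact hi (hj i)
      have h0 : Tendsto (fun n : ℕ => (0:ℝ)) atTop (𝓝 (dens ℓ w)) := by
        refine (hA w).congr fun n => ?_
        rw [hzeroA]; simp
      have := tendsto_nhds_unique h0 tendsto_const_nhds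
      exact absurd this.symm (ne_of_lt (hWpos w hw))
    have hWge2 : ∀ w ∈ W, ∀ i : Fin ℓ, 2 ≤ w i := by
      intro w hw i
      obtain ⟨j, hj⟩ := hWocc w hw
      rw [← hj i]; exact hQ _
    -- the window counts tend to infinity
    have hAinf : ∀ w ∈ W, Tendsto (fun n => (A w n : ℝ)) atTop atTop := by
      intro w hw
      have hd := hWpos w hw
      have hev : ∀ᶠ n : ℕ in atTop, dens ℓ w / 2 * (n : ℝ) ≤ (A w n : ℝ) := by
        have h1 : ∀ᶠ n : ℕ in atTop, dens ℓ w / 2 < (A w n : ℝ) / n :=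
          (hA w).eventually (eventually_gt_nhds (by linarith))
        filter_upwards [h1, eventually_ge_atTop 1] with n h1 h2
        have hn : (0:ℝ) < n := by exact_mod_cast h2
        rw [lt_div_iff₀ hn] at h1
        linarith
      exact tendsto_atTop_mono' atTop hev
        ((tendsto_natCast_atTop_atTop).const_mul_atTop (by linarith))
    -- the finite set of blocks
    set F : Finset (Fin ℓ → ℕ) :=
      W.biUnion (fun w => Fintype.piFinset fun i => Finset.range (w i)) with hFdef
    have hmemF : ∀ D' : Fin ℓ → ℕ, D' ∈ F ↔ ∃ w ∈ W, ∀ i, D' i < w i := by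
      intro D'
      rw [hFdef]
      simp [Fintype.mem_piFinset, Finset.mem_range]
    -- QnD of blocks in F tends to infinity
    have hQinf : ∀ D' ∈ F, Tendsto (fun n => QnD Q D' n) atTop atTop := by
      intro D' hD'
      obtain ⟨w, hw, hlt⟩ := (hmemF D').1 hD'
      have hprod : (0:ℝ) < ∏ i : Fin ℓ, (w i : ℝ) := by
        apply Finset.prod_pos
        intro i _
        have := hWge2 w hw i
        positivity
      have hle : ∀ n, (A w n : ℝ) * (∏ i : Fin ℓ, (w i : ℝ))⁻¹ ≤ QnD Q D' n := by
        intro n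
        unfold QnD
        rw [hAdef]
        have : ((((Finset.Icc 1 n).filter
            fun j => ∀ i : Fin ℓ, Q (j + (i : ℕ)) = w i).card : ℝ))
            * (∏ i : Fin ℓ, (w i : ℝ))⁻¹
            = ∑ j ∈ (Finset.Icc 1 n).filter
                (fun j => ∀ i : Fin ℓ, Q (j + (i : ℕ)) = w i),
              (if ∀ i : Fin ℓ, D' i < Q (j + (i : ℕ))
                then (∏ i : Fin ℓ, (Q (j + (i : ℕ)) : ℝ))⁻¹ else 0) := by
          rw [Finset.sum_congr rfl (g := fun _ => (∏ i : Fin ℓ, (w i : ℝ))⁻¹)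
            (fun j hj => ?_), Finset.sum_const, nsmul_eq_mul]
          have hj' := (Finset.mem_filter.1 hj).2
          rw [if_pos fun i => by rw [hj' i]; exact hlt i]
          congr 1
          exact Finset.prod_congr rfl fun i _ => by rw [hj' i]
        rw [this]
        apply Finset.sum_le_sum_of_subset_of_nonneg (Finset.filter_subset _ _)
        intro j _ _
        split
        · positivity
        · exact le_rfl
      refine tendsto_atTop_mono' atTop (Eventually.of_forall hle) ?_
      exact ((hAinf w hw).atTop_mul_const (inv_pos.2 hprod))
    -- a distinguished element of F
    obtain ⟨w₀, hw₀⟩ : ∃ w, w ∈ W := by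
      by_contra h
      push_neg at h
      have : W = ∅ := Finset.eq_empty_of_forall_notMem h
      rw [this, Finset.sum_empty] at hWsum
      linarith
    have hD₀ : (fun _ : Fin ℓ => 0) ∈ F := by
      rw [hmemF]
      exact ⟨w₀, hw₀, fun i => by have := hWge2 w₀ hw₀ i; omega⟩
    -- counting identities
    set G : ℕ → ℕ := fun n =>
      ((Finset.Icc 1 n).filter fun j => (fun i : Fin ℓ => Q (j + (i : ℕ))) ∈ W).card
      with hGdef
    have hSumN : ∀ n : ℕ, ∑ D' ∈ F, NnD Q y D' n
        = (((Finset.Icc 1 n).filter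
            fun j => (fun i : Fin ℓ => qdigit Q y (j + (i : ℕ))) ∈ F).card : ℝ) := by
      intro n
      rw [card_filter_mem_eq_sum (Finset.Icc 1 n) F
        (fun j => (fun i : Fin ℓ => qdigit Q y (j + (i : ℕ)))), Nat.cast_sum]
      refine Finset.sum_congr rfl fun D' _ => ?_
      rw [NnD_eq_card]
      norm_cast
      apply Finset.card_bij' (fun a _ => a) (fun a _ => a) <;> try (intro a ha; rfl)
      · intro a ha
        simp only [Finset.mem_filter] at ha ⊢
        exact ⟨ha.1, funext_iff.2 ha.2⟩
      · intro a ha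
        simp only [Finset.mem_filter] at ha ⊢
        exact ⟨ha.1, funext_iff.1 ha.2⟩
    have hSumN_le : ∀ n : ℕ, ∑ D' ∈ F, NnD Q y D' n ≤ (n : ℝ) := by
      intro n
      rw [hSumN n]
      have h1 := Finset.card_filter_le (Finset.Icc 1 n)
        (fun j => (fun i : Fin ℓ => qdigit Q y (j + (i : ℕ))) ∈ F)
      rw [Nat.card_Icc] at h1
      have h2 : ((Finset.Icc 1 n).filter
          (fun j => (fun i : Fin ℓ => qdigit Q y (j + (i : ℕ))) ∈ F)).card ≤ n := by omega
      exact_mod_cast h2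
    have hG_le_SumN : ∀ n : ℕ, (G n : ℝ) ≤ ∑ D' ∈ F, NnD Q y D' n := by
      intro n
      rw [hSumN n, hGdef]
      have hsub : ((Finset.Icc 1 n).filter fun j => (fun i : Fin ℓ => Q (j + (i : ℕ))) ∈ W)
          ⊆ ((Finset.Icc 1 n).filter
            fun j => (fun i : Fin ℓ => qdigit Q y (j + (i : ℕ))) ∈ F) := by
        intro j hj
        rw [Finset.mem_filter] at hj ⊢
        refine ⟨hj.1, (hmemF _).2 ⟨_, hj.2, fun i => ?_⟩⟩
        exact qdigit_lt_q Q hQ y (j + (i : ℕ))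
      exact_mod_cast Finset.card_le_card hsub
    have hG_eq : ∀ n : ℕ, G n = ∑ w ∈ W, A w n := by
      intro n
      show ((Finset.Icc 1 n).filter
        fun j => (fun i : Fin ℓ => Q (j + (i : ℕ))) ∈ W).card = _
      rw [card_filter_mem_eq_sum (Finset.Icc 1 n) W
        (fun j => (fun i : Fin ℓ => Q (j + (i : ℕ))))]
      refine Finset.sum_congr rfl fun w _ => ?_
      rw [hAdef]
      apply Finset.card_bij' (fun a _ => a) (fun a _ => a) <;> try (intro a ha; rfl)
      · intro a ha
        simp only [Finset.mem_filter] at ha ⊢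
        exact ⟨ha.1, funext_iff.1 ha.2⟩
      · intro a ha
        simp only [Finset.mem_filter] at ha ⊢
        exact ⟨ha.1, funext_iff.2 ha.2⟩
    have hGtend : Tendsto (fun n => (G n : ℝ) / n) atTop (𝓝 (∑ w ∈ W, dens ℓ w)) := by
      have h := tendsto_finset_sum W (fun w _ => hA w)
      refine h.congr fun n => ?_
      rw [hG_eq n]
      push_cast
      rw [Finset.sum_div]
    have hGev : ∀ᶠ n : ℕ in atTop, (1 - θ) * n ≤ (G n : ℝ) := by
      have h1 : ∀ᶠ n : ℕ in atTop, 1 - θ < (G n : ℝ) / n :=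
        hGtend.eventually (eventually_gt_nhds (by linarith))
      filter_upwards [h1, eventually_ge_atTop 1] with n h1 h2
      have hn : (0:ℝ) < n := by exact_mod_cast h2
      rw [lt_div_iff₀ hn] at h1
      linarith
    -- the sum of expected counts over F
    have hQs : ∀ n : ℕ, ∑ D' ∈ F, QnD Q D' n
        = ∑ j ∈ Finset.Icc 1 n,
            ((F.filter fun D' => ∀ i : Fin ℓ, D' i < Q (j + (i : ℕ))).card : ℝ)
              * (∏ i : Fin ℓ, (Q (j + (i : ℕ)) : ℝ))⁻¹ := by
      intro n
      unfold QnD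
      rw [Finset.sum_comm]
      refine Finset.sum_congr rfl fun j _ => ?_
      rw [← Finset.sum_filter, Finset.sum_const, nsmul_eq_mul]
    have hprodpos : ∀ j : ℕ, (0:ℝ) < ∏ i : Fin ℓ, (Q (j + (i : ℕ)) : ℝ) := by
      intro j
      apply Finset.prod_pos
      intro i _
      have := hQ (j + (i : ℕ))
      positivity
    have hterm_nonneg : ∀ j : ℕ,
        (0:ℝ) ≤ ((F.filter fun D' => ∀ i : Fin ℓ, D' i < Q (j + (i : ℕ))).card : ℝ)
          * (∏ i : Fin ℓ, (Q (j + (i : ℕ)) : ℝ))⁻¹ := by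
      intro j
      have := hprodpos j
      positivity
    have hterm_le : ∀ j : ℕ,
        ((F.filter fun D' => ∀ i : Fin ℓ, D' i < Q (j + (i : ℕ))).card : ℝ)
          * (∏ i : Fin ℓ, (Q (j + (i : ℕ)) : ℝ))⁻¹ ≤ 1 := by
      intro j
      have hsub : (F.filter fun D' => ∀ i : Fin ℓ, D' i < Q (j + (i : ℕ)))
          ⊆ Fintype.piFinset fun i : Fin ℓ => Finset.range (Q (j + (i : ℕ))) := by
        intro D' hD'
        rw [Fintype.mem_piFinset]
        intro i
        rw [Finset.mem_range]
        exact (Finset.mem_filter.1 hD').2 i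
      have hcard := Finset.card_le_card hsub
      rw [Fintype.card_piFinset] at hcard
      simp only [Finset.card_range] at hcard
      have hp := hprodpos j
      calc ((F.filter fun D' => ∀ i : Fin ℓ, D' i < Q (j + (i : ℕ))).card : ℝ)
            * (∏ i : Fin ℓ, (Q (j + (i : ℕ)) : ℝ))⁻¹
          ≤ (∏ i : Fin ℓ, (Q (j + (i : ℕ)) : ℝ))
            * (∏ i : Fin ℓ, (Q (j + (i : ℕ)) : ℝ))⁻¹ := by
            apply mul_le_mul_of_nonneg_right _ (by positivity)
            exact_mod_cast hcard
        _ = 1 := mul_inv_cancel₀ hp.ne'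
    have hterm_eq : ∀ j : ℕ, ((fun i : Fin ℓ => Q (j + (i : ℕ))) ∈ W) →
        ((F.filter fun D' => ∀ i : Fin ℓ, D' i < Q (j + (i : ℕ))).card : ℝ)
          * (∏ i : Fin ℓ, (Q (j + (i : ℕ)) : ℝ))⁻¹ = 1 := by
      intro j hj
      have hfeq : (F.filter fun D' => ∀ i : Fin ℓ, D' i < Q (j + (i : ℕ)))
          = Fintype.piFinset fun i : Fin ℓ => Finset.range (Q (j + (i : ℕ))) := by
        ext D'
        simp only [Finset.mem_filter, Fintype.mem_piFinset, Finset.mem_range]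
        constructor
        · rintro ⟨_, h⟩; exact h
        · intro h
          exact ⟨(hmemF D').2 ⟨_, hj, h⟩, h⟩
      rw [hfeq, Fintype.card_piFinset]
      simp only [Finset.card_range]
      rw [Nat.cast_prod]
      exact mul_inv_cancel₀ (hprodpos j).ne'
    have hQs_le : ∀ n : ℕ, ∑ D' ∈ F, QnD Q D' n ≤ (n : ℝ) := by
      intro n
      rw [hQs n]
      calc ∑ j ∈ Finset.Icc 1 n,
            ((F.filter fun D' => ∀ i : Fin ℓ, D' i < Q (j + (i : ℕ))).card : ℝ)
              * (∏ i : Fin ℓ, (Q (j + (i : ℕ)) : ℝ))⁻¹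
          ≤ ∑ j ∈ Finset.Icc 1 n, (1:ℝ) := Finset.sum_le_sum fun j _ => hterm_le j
        _ = ((Finset.Icc 1 n).card : ℝ) := by rw [Finset.sum_const, nsmul_eq_mul, mul_one]
        _ = (n : ℝ) := by rw [Nat.card_Icc]; norm_num
    have hQs_ge : ∀ n : ℕ, (G n : ℝ) ≤ ∑ D' ∈ F, QnD Q D' n := by
      intro n
      rw [hQs n, hGdef]
      calc (((Finset.Icc 1 n).filter
              fun j => (fun i : Fin ℓ => Q (j + (i : ℕ))) ∈ W).card : ℝ)
          = ∑ j ∈ (Finset.Icc 1 n).filter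
              (fun j => (fun i : Fin ℓ => Q (j + (i : ℕ))) ∈ W), (1:ℝ) := by
            rw [Finset.sum_const, nsmul_eq_mul, mul_one]
        _ = ∑ j ∈ (Finset.Icc 1 n).filter
              (fun j => (fun i : Fin ℓ => Q (j + (i : ℕ))) ∈ W),
              ((F.filter fun D' => ∀ i : Fin ℓ, D' i < Q (j + (i : ℕ))).card : ℝ)
                * (∏ i : Fin ℓ, (Q (j + (i : ℕ)) : ℝ))⁻¹ := by
            refine Finset.sum_congr rfl fun j hj => ?_
            exact (hterm_eq j (Finset.mem_filter.1 hj).2).symm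
        _ ≤ ∑ j ∈ Finset.Icc 1 n,
              ((F.filter fun D' => ∀ i : Fin ℓ, D' i < Q (j + (i : ℕ))).card : ℝ)
                * (∏ i : Fin ℓ, (Q (j + (i : ℕ)) : ℝ))⁻¹ := by
            apply Finset.sum_le_sum_of_subset_of_nonneg (Finset.filter_subset _ _)
            intro j _ _
            exact hterm_nonneg j
    -- eventual bounds from ratio normality
    have hqev : ∀ᶠ n : ℕ in atTop, ∀ D' ∈ F,
        0 < QnD Q D' n ∧
        1 - θ ≤ (NnD Q y D' n / QnD Q D' n) / (NnD Q y D n / QnD Q D n) ∧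
        (NnD Q y D' n / QnD Q D' n) / (NnD Q y D n / QnD Q D n) ≤ 1 + θ := by
      rw [eventually_all_finset]
      intro D' hD'
      have hq := hrn ℓ D' D (min_tendsto_atTop (hQinf D' hD') hD)
      filter_upwards [(hQinf D' hD').eventually_gt_atTop 0,
        hq.eventually (eventually_ge_nhds (show (1:ℝ) - θ < 1 by linarith)),
        hq.eventually (eventually_le_nhds (show (1:ℝ) < 1 + θ by linarith))] with
        n h1 h2 h3
      exact ⟨h1, h2, h3⟩
    -- the final estimate
    filter_upwards [hGev, hqev, hD.eventually_gt_atTop 0, eventually_ge_atTop 1] with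
      n hG hq hQD hn1
    have hnR : (0:ℝ) < n := by exact_mod_cast hn1
    set r := NnD Q y D n / QnD Q D n with hrdef
    have hr0 : 0 ≤ r := div_nonneg (NnD_nonneg _ _ _ _) (QnD_nonneg _ _ _)
    have hrpos : 0 < r := by
      rcases eq_or_lt_of_le hr0 with h | h
      · exfalso
        obtain ⟨_, h1, _⟩ := hq _ hD₀
        rw [← h, div_zero] at h1
        linarith
      · exact h
    have hblk : ∀ D' ∈ F,
        (1 - θ) * r * QnD Q D' n ≤ NnD Q y D' n ∧
        NnD Q y D' n ≤ (1 + θ) * r * QnD Q D' n := by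
      intro D' hD'
      obtain ⟨hQ', h1, h2⟩ := hq D' hD'
      have hrne : r ≠ 0 := hrpos.ne'
      have hQne : QnD Q D' n ≠ 0 := hQ'.ne'
      have e2 : NnD Q y D' n
          = ((NnD Q y D' n / QnD Q D' n) / r) * r * QnD Q D' n := by
        field_simp
      constructor
      · calc (1 - θ) * r * QnD Q D' n
            ≤ ((NnD Q y D' n / QnD Q D' n) / r) * r * QnD Q D' n :=
              mul_le_mul_of_nonneg_right
                (mul_le_mul_of_nonneg_right h1 hrpos.le) hQ'.le
          _ = NnD Q y D' n := e2.symm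
      · calc NnD Q y D' n
            = ((NnD Q y D' n / QnD Q D' n) / r) * r * QnD Q D' n := e2
          _ ≤ (1 + θ) * r * QnD Q D' n :=
              mul_le_mul_of_nonneg_right
                (mul_le_mul_of_nonneg_right h2 hrpos.le) hQ'.le
    have hSN_ge : (1 - θ) * r * (∑ D' ∈ F, QnD Q D' n) ≤ ∑ D' ∈ F, NnD Q y D' n := by
      rw [Finset.mul_sum]
      exact Finset.sum_le_sum fun D' hD' => (hblk D' hD').1
    have hSN_le : ∑ D' ∈ F, NnD Q y D' n ≤ (1 + θ) * r * (∑ D' ∈ F, QnD Q D' n) := by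
      rw [Finset.mul_sum]
      exact Finset.sum_le_sum fun D' hD' => (hblk D' hD').2
    -- combine everything
    have hc1 : (1 - θ) * r * ((1 - θ) * n) ≤ (n : ℝ) := by
      have hge : (1 - θ) * (n:ℝ) ≤ ∑ D' ∈ F, QnD Q D' n :=
        le_trans hG (hQs_ge n)
      have h2 : (1 - θ) * r * ((1 - θ) * n) ≤ (1 - θ) * r * (∑ D' ∈ F, QnD Q D' n) := by
        apply mul_le_mul_of_nonneg_left hge
        have h3 : (0:ℝ) ≤ 1 - θ := by linarith
        positivity
      exact le_trans h2 (le_trans hSN_ge (hSumN_le n))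
    have hc2 : (1 - θ) * (n : ℝ) ≤ (1 + θ) * r * n := by
      have hge : (1 - θ) * (n:ℝ) ≤ ∑ D' ∈ F, NnD Q y D' n :=
        le_trans hG (hG_le_SumN n)
      have h2 : ∑ D' ∈ F, NnD Q y D' n ≤ (1 + θ) * r * n := by
        refine le_trans hSN_le ?_
        apply mul_le_mul_of_nonneg_left (hQs_le n)
        positivity
      linarith
    have hu : (1 - θ) * r * (1 - θ) ≤ 1 := by nlinarith [hc1, hnR]
    have hl : (1 - θ) ≤ (1 + θ) * r := by nlinarith [hc2, hnR]
    have key : (1:ℝ) ≤ (1 + 8 * θ) * ((1 - θ) * (1 - θ)) := by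
      nlinarith [mul_nonneg hθ0.le (sq_nonneg (θ - 1/2)),
        mul_nonneg hθ0.le (show (0:ℝ) ≤ 1/2 - θ by linarith)]
    have hsqpos : (0:ℝ) < (1 - θ) * (1 - θ) := by nlinarith
    have hrub : r ≤ 1 + 8 * θ := by
      have h : r * ((1 - θ) * (1 - θ)) ≤ (1 + 8 * θ) * ((1 - θ) * (1 - θ)) := by
        nlinarith [hu, key]
      exact le_of_mul_le_mul_right h hsqpos
    have hm1 : θ * r ≤ θ * (1 + 8 * θ) := mul_le_mul_of_nonneg_left hrub hθ0.le
    have hm2 : θ * θ ≤ θ * (1 / 2) := mul_le_mul_of_nonneg_left hθh hθ0.le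
    rw [Real.dist_eq, abs_sub_lt_iff]
    constructor
    · linarith [hrub, hθε, hε]
    · linarith [hl, hm1, hm2, hθε, hε, hθ0]

  · -- easy direction: normal → ratio normal
    intro hn ℓ D₁ D₂ hmin
    have h1 : Tendsto (fun n => QnD Q D₁ n) atTop atTop :=
      tendsto_atTop_mono (fun n => min_le_left _ _) hmin
    have h2 : Tendsto (fun n => QnD Q D₂ n) atTop atTop :=
      tendsto_atTop_mono (fun n => min_le_right _ _) hmin
    have := (hn ℓ D₁ h1).div (hn ℓ D₂ h2) one_ne_zero
    simpa only [div_one, Pi.div_def] using this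
end
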